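/- arXiv:2204.06482 — 4 statements merged into one kernel-verified Lean document; each statement's English description precedes it below -/
import Mathlib

section
/- Let ℓ ≥ 0, μ ∈ 𝒫_ℓ(ℝ^d), and let ν_i ∈ 𝒫_ℓ(ℝ^d) be such that W_ℓ((1/N)Σ_{i=1}^N ν_i(dx)ν_i(dy), η(dx,dy)) → 0 for some η ∈ 𝒫_ℓ(ℝ^d × ℝ^d) with both marginals equal to μ. Let g : ℝ^d → ℝ be μ-almost everywhere continuous with |g(x)| ≤ C(1+|x|^{ℓ/2}) for some C < ∞. Then ∬ g(x)g(y) η(dx,dy) ≥ (∫ g(x) μ(dx))²; consequently ∫ g(x)² μ(dx) − ∬ g(x)g(y) η(dx,dy) ≤ ∫ g(x)² μ(dx) − (∫ g(x) μ(dx))². -/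
open MeasureTheory ProbabilityTheory Filter ENNReal Topology

noncomputable section

/-- `ℝ^d` with the Euclidean norm. -/
abbrev Euc (d : ℕ) := EuclideanSpace ℝ (Fin d)

namespace Paper

variable {E : Type*} [MeasurableSpace E]

/-- The set of couplings between two measures. -/
def couplings (μ ν : Measure E) : Set (Measure (E × E)) :=
  {ρ | IsProbabilityMeasure ρ ∧ ρ.map Prod.fst = μ ∧ ρ.map Prod.snd = ν}

/-- The `ℓ`-Wasserstein distance `W_ℓ` (in `ℝ≥0∞`), for `ℓ > 0` with cost `dist^ℓ` and
exponent `1/(ℓ ∨ 1)`, and for `ℓ = 0` with cost `1 ∧ dist`. -/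
def Wl [PseudoMetricSpace E] (ℓ : ℝ) (μ ν : Measure E) : ℝ≥0∞ :=
  ⨅ ρ ∈ couplings μ ν,
    if ℓ = 0 then ∫⁻ p, ENNReal.ofReal (min 1 (dist p.1 p.2)) ∂ρ
    else (∫⁻ p, ENNReal.ofReal (dist p.1 p.2 ^ ℓ) ∂ρ) ^ (1 / max ℓ 1)

variable [NormedAddCommGroup E]

/-- Membership in the Wasserstein space `𝒫_ℓ`. -/
def MemP (ℓ : ℝ) (μ : Measure E) : Prop :=
  IsProbabilityMeasure μ ∧ ∫⁻ x, ENNReal.ofReal (‖x‖ ^ ℓ) ∂μ < ⊤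

/-- The `W_ℓ`-ball of radius `r` centered at `μ`, inside `𝒫_ℓ`. -/
def ball (ℓ : ℝ) (μ : Measure E) (r : ℝ) : Set (Measure E) :=
  {m | MemP ℓ m ∧ Wl ℓ m μ < ENNReal.ofReal r}

/-- The average `(1/N) ∑_{i=1}^N ν_i` (indexing `ν 0 = ν_1`). -/
def avg (ν : ℕ → Measure E) (N : ℕ) : Measure E :=
  (N : ℝ≥0∞)⁻¹ • ∑ i ∈ Finset.range N, ν i

/-- The empirical measure `μ_N = (1/N) ∑_{i=1}^N δ_{X_i}` (indexing `X 0 = X_1`). -/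
def emp {Ω : Type*} (X : ℕ → Ω → E) (N : ℕ) (ω : Ω) : Measure E :=
  (N : ℝ≥0∞)⁻¹ • ∑ i ∈ Finset.range N, Measure.dirac (X i ω)

/-- Condition TX: there is `β ∈ (0,1)` with
`∑_{i≥1} (1/i) E((|X_i|^ℓ - i^β) 1_{|X_i|^ℓ > i^β}) < ∞` (indexing `X 0 = X_1`). -/
def TX {Ω : Type*} [MeasurableSpace Ω] (Pr : Measure Ω) (X : ℕ → Ω → E) (ℓ : ℝ) : Prop :=
  ∃ β ∈ Set.Ioo (0:ℝ) 1,
    (∑' i : ℕ, ((i : ℝ≥0∞) + 1)⁻¹ *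
      ∫⁻ ω in {ω | ((i : ℝ) + 1) ^ β < ‖X i ω‖ ^ ℓ},
        ENNReal.ofReal (‖X i ω‖ ^ ℓ - ((i : ℝ) + 1) ^ β) ∂Pr) < ⊤

/-- The total variation measure `|μ - ν|` of the difference of two (finite) measures. -/
def mdiff (μ ν : Measure E) : Measure E := (μ - ν) + (ν - μ)

/-- The norm `‖μ - ν‖_ℓ = sup {∫ f d(μ-ν) : f measurable, |f| ≤ 1 + |x|^ℓ}`. -/
def normLdiff (ℓ : ℝ) (μ ν : Measure E) : ℝ :=
  sSup {c | ∃ f : E → ℝ, Measurable f ∧ (∀ x, |f x| ≤ 1 + ‖x‖ ^ ℓ) ∧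
    c = ∫ x, f x ∂μ - ∫ x, f x ∂ν}

/-- Integral of `f` against a signed measure. -/
def sInt (τ : SignedMeasure E) (f : E → ℝ) : ℝ :=
  ∫ x, f x ∂τ.toJordanDecomposition.posPart - ∫ x, f x ∂τ.toJordanDecomposition.negPart

/-- `U` admits `DU` as linear functional derivative at `μ` (on `𝒫_ℓ`). -/
def HasLFDAt (ℓ : ℝ) (U : Measure E → ℝ) (μ : Measure E) (DU : E → ℝ) : Prop :=
  Measurable DU ∧ (∃ C : ℝ, ∀ y, |DU y| ≤ C * (1 + ‖y‖ ^ ℓ)) ∧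
    ∀ ν : Measure E, MemP ℓ ν →
      HasDerivWithinAt (fun ε : ℝ => U (ENNReal.ofReal (1 - ε) • μ + ENNReal.ofReal ε • ν))
        ((∫ y, DU y ∂ν) - ∫ y, DU y ∂μ) (Set.Ici 0) 0

/-- RU1: `U` admits a linear functional derivative `DU m` at every `m` in the ball `B(μ,r)`. -/
def RU1 (ℓ r : ℝ) (U : Measure E → ℝ) (μ : Measure E) (DU : Measure E → E → ℝ) : Prop :=
  ∀ m ∈ ball ℓ μ r, HasLFDAt ℓ U m (DU m)

/-- RU2: uniform growth bound `|δU/δm(m,x)| ≤ C (1+|x|^{ℓ/2})` on the ball. -/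
def RU2 (ℓ r : ℝ) (μ : Measure E) (DU : Measure E → E → ℝ) : Prop :=
  ∃ C : ℝ, ∀ m ∈ ball ℓ μ r, ∀ x, |DU m x| ≤ C * (1 + ‖x‖ ^ (ℓ / 2))

/-- RU3: `sup_x |δU/δm(m,x) - δU/δm(μ,x)|/(1+|x|^{ℓ/2}) → 0` as `W_ℓ(m,μ) → 0`. -/
def RU3 (ℓ r : ℝ) (μ : Measure E) (DU : Measure E → E → ℝ) : Prop :=
  ∀ ε > (0:ℝ), ∃ δ > (0:ℝ), ∀ m ∈ ball ℓ μ r, Wl ℓ m μ < ENNReal.ofReal δ →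
    ∀ x, |DU m x - DU μ x| ≤ ε * (1 + ‖x‖ ^ (ℓ / 2))

/-- RU4: `x ↦ δU/δm(μ,x)` is continuous `μ`-a.e. -/
def RU4 (μ : Measure E) (DU : Measure E → E → ℝ) : Prop :=
  ∀ᵐ x ∂μ, ContinuousAt (DU μ) x

/-- RU5 (with exponent `α`): Hölder-type stability of the derivative on the ball. -/
def RU5 (ℓ α r : ℝ) (μ : Measure E) (DU : Measure E → E → ℝ) : Prop :=
  ∃ C : ℝ, ∀ m₁ ∈ ball ℓ μ r, ∀ m₂ ∈ ball ℓ μ r, ∀ x,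
    |DU m₂ x - DU m₁ x| ≤
      C * ((1 + ‖x‖ ^ ℓ) * (((mdiff m₂ m₁) Set.univ).toReal) ^ α +
        (1 + ‖x‖ ^ (ℓ * (1 - α))) * (∫ y, ‖y‖ ^ ℓ ∂(mdiff m₂ m₁)) ^ α)

/-- RU6 (with exponent `α`): Hölder-type stability of the derivative on the ball. -/
def RU6 (ℓ α r : ℝ) (μ : Measure E) (DU : Measure E → E → ℝ) : Prop :=
  ∃ C : ℝ, ∀ m₁ ∈ ball ℓ μ r, ∀ m₂ ∈ ball ℓ μ r, ∀ x,
    |DU m₂ x - DU m₁ x| ≤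
      C * (∫ y, (1 + ‖y‖ ^ (ℓ / (2 * α))) ∂(mdiff m₂ m₁)) ^ α * (1 + ‖x‖ ^ (ℓ / 2))

/-- Lyapunov condition L1: `PV(x) ≤ γ V(x) + K`. -/
def Lyap1 (P : Kernel E E) (V : E → ℝ) (γ K : ℝ) : Prop :=
  ∀ x, ∫⁻ y, ENNReal.ofReal (V y) ∂(P x) ≤ ENNReal.ofReal (γ * V x + K)

/-- Lyapunov minorization condition: `(P(x,·) ∧ P(y,·))(ℝ^d) ≥ ρ` when `V(x)+V(y) ≤ R`. -/
def Lyap2 (P : Kernel E E) (V : E → ℝ) (R ρ : ℝ) : Prop :=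
  ∀ x y, V x + V y ≤ R → ENNReal.ofReal ρ ≤ (P x ⊓ P y) Set.univ

/-- The full Lyapunov condition with data `(V, γ, K, R, ρ)`. -/
def Lyapunov (P : Kernel E E) (V : E → ℝ) (γ K R ρ : ℝ) : Prop :=
  Measurable V ∧ (∀ x, 0 ≤ V x) ∧ γ ∈ Set.Ioo (0:ℝ) 1 ∧ 0 ≤ K ∧
    2 * K / (1 - γ) < R ∧ ρ ∈ Set.Ioc (0:ℝ) 1 ∧ Lyap1 P V γ K ∧ Lyap2 P V R ρ

/-- `n` steps of the kernel `P` starting from the measure `σ`, i.e. `σ Pⁿ`. -/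
def kIter (P : Kernel E E) (σ : Measure E) : ℕ → Measure E
  | 0 => σ
  | n + 1 => (kIter P σ n).bind (⇑P)

/-- `Pⁿ f (x)`. -/
def Pn (P : Kernel E E) (n : ℕ) (f : E → ℝ) (x : E) : ℝ :=
  ∫ y, f y ∂(kIter P (Measure.dirac x) n)

/-- The contraction factor `χ(ρ,β,γ,K,R)`. -/
def chi (ρ β γ K R : ℝ) : ℝ :=
  max (1 - ρ + β * K) ((2 + β * γ * R + 2 * β * K) / (2 + β * R))

/-- The distance `d_{V,β}(θ,σ) = sup {|θ(φ) - σ(φ)| : ‖φ‖_{V,β} ≤ 1}`. -/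
def dV (V : E → ℝ) (β : ℝ) (θ σ' : Measure E) : ℝ :=
  sSup {c | ∃ φ : E → ℝ, Measurable φ ∧ (∀ x, |φ x| ≤ 1 + β * V x) ∧
    c = |(∫ x, φ x ∂θ) - ∫ x, φ x ∂σ'|}

/-- `(X_i)_{i ≥ 1}` (indexed so that `X 0 = X_1`) is a Markov chain with initial law `ν₁`
and transition kernel `P` on the probability space `(Ω, Pr)`. -/
def IsMarkovChain {Ω : Type*} [MeasurableSpace Ω] (Pr : Measure Ω) (X : ℕ → Ω → E)
    (ν₁ : Measure E) (P : Kernel E E) : Prop :=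
  (∀ i, Measurable (X i)) ∧ Pr.map (X 0) = ν₁ ∧
    ∀ i : ℕ, ∀ A : Set E, MeasurableSet A →
      (fun ω => ((P (X i ω)) A).toReal) =ᵐ[Pr]
        Pr[fun ω => Set.indicator A (fun _ => (1:ℝ)) (X (i + 1) ω) |
          MeasurableSpace.comap (fun ω (j : Fin (i + 1)) => X j.1 ω) MeasurableSpace.pi]

/-- Convergence in distribution of the real random variables `Y N` to the law `G`. -/
def cid {Ω : Type*} [MeasurableSpace Ω] (Pr : Measure Ω) (Y : ℕ → Ω → ℝ) (G : Measure ℝ) : Prop :=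
  ∀ f : BoundedContinuousFunction ℝ ℝ,
    Tendsto (fun N => ∫ ω, f (Y N ω) ∂Pr) atTop (𝓝 (∫ x, f x ∂G))

end Paper

open Paper


section StmtTwoAux

open MeasureTheory

private lemma meas_le_aux {α : Type*} [MeasurableSpace α] (ρ : Measure α) {A : Set α}
    (hA : MeasurableSet A) {φ : α → ℝ} {c θ : ℝ} (hc : 0 < c)
    (hAφ : ∀ q ∈ A, c ≤ φ q)
    (h : ∫⁻ q, ENNReal.ofReal (φ q) ∂ρ < ENNReal.ofReal (c * θ)) :
    ρ A ≤ ENNReal.ofReal θ := by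
  have hlow : ENNReal.ofReal c * ρ A ≤ ∫⁻ q, ENNReal.ofReal (φ q) ∂ρ := by
    have h1 : ENNReal.ofReal c * ρ A = ∫⁻ q in A, ENNReal.ofReal c ∂ρ := by
      rw [setLIntegral_const]
    rw [h1]
    refine le_trans (setLIntegral_mono' hA fun q hq => ENNReal.ofReal_le_ofReal (hAφ q hq)) ?_
    exact setLIntegral_le_lintegral _ _
  have h2 := hlow.trans_lt h
  rw [ENNReal.ofReal_mul hc.le] at h2
  exact ((ENNReal.mul_lt_mul_iff_right (by simp [ENNReal.ofReal_eq_zero, not_le, hc]) ENNReal.ofReal_ne_top).mp h2).le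

private lemma dist_integral_le_of_coupling {E : Type*} [MeasurableSpace E] [PseudoMetricSpace E]
    [OpensMeasurableSpace E] [SecondCountableTopology E]
    {κ η : Measure E} {ρ : Measure (E × E)} (hprob : IsProbabilityMeasure ρ)
    (hfst : ρ.map Prod.fst = κ) (hsnd : ρ.map Prod.snd = η)
    {f : E → ℝ} (hfc : Continuous f) {M : ℝ} (hM0 : 0 ≤ M) (hM : ∀ x, |f x| ≤ M)
    {δ c θ : ℝ} (hc : 0 ≤ c)
    (hδf : ∀ a b : E, dist a b < δ → dist (f a) (f b) < c)
    (hθ : 0 ≤ θ)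
    (hρA : ρ {q : E × E | δ ≤ dist q.1 q.2} ≤ ENNReal.ofReal θ) :
    dist (∫ x, f x ∂κ) (∫ x, f x ∂η) ≤ c + 2 * M * θ := by
  haveI := hprob
  set A : Set (E × E) := {q | δ ≤ dist q.1 q.2} with hA
  have hAm : MeasurableSet A := measurableSet_le measurable_const continuous_dist.measurable
  have hi1 : Integrable (fun q : E × E => f q.1) ρ :=
    ⟨(hfc.comp continuous_fst).aestronglyMeasurable,
      HasFiniteIntegral.of_bounded (C := M)
        (Filter.Eventually.of_forall fun q => by simpa [Real.norm_eq_abs] using hM q.1)⟩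
  have hi2 : Integrable (fun q : E × E => f q.2) ρ :=
    ⟨(hfc.comp continuous_snd).aestronglyMeasurable,
      HasFiniteIntegral.of_bounded (C := M)
        (Filter.Eventually.of_forall fun q => by simpa [Real.norm_eq_abs] using hM q.2)⟩
  have h1 : ∫ x, f x ∂κ = ∫ q, f q.1 ∂ρ := by
    rw [← hfst, integral_map measurable_fst.aemeasurable hfc.aestronglyMeasurable]
  have h2 : ∫ x, f x ∂η = ∫ q, f q.2 ∂ρ := by
    rw [← hsnd, integral_map measurable_snd.aemeasurable hfc.aestronglyMeasurable]
  rw [h1, h2, Real.dist_eq, ← integral_sub hi1 hi2]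
  have hiR : Integrable (fun q : E × E => c + 2 * M * A.indicator (fun _ => (1:ℝ)) q) ρ :=
    (integrable_const c).add (((integrable_const (1:ℝ)).indicator hAm).const_mul (2 * M))
  calc |∫ q, (f q.1 - f q.2) ∂ρ| ≤ ∫ q, |f q.1 - f q.2| ∂ρ := by
        simpa [Real.norm_eq_abs] using norm_integral_le_integral_norm (fun q : E × E => f q.1 - f q.2) (μ := ρ)
    _ ≤ ∫ q, (c + 2 * M * A.indicator (fun _ => (1:ℝ)) q) ∂ρ := by
        refine integral_mono (hi1.sub hi2).abs hiR fun q => ?_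
        by_cases hq : δ ≤ dist q.1 q.2
        · have hqA : q ∈ A := hq
          rw [Set.indicator_of_mem hqA]
          have e1 := hM q.1
          have e2 := hM q.2
          calc |f q.1 - f q.2| ≤ |f q.1| + |f q.2| := abs_sub _ _
            _ ≤ c + 2 * M * 1 := by linarith
        · have hqA : q ∉ A := hq
          rw [Set.indicator_of_notMem hqA]
          have := hδf q.1 q.2 (lt_of_not_ge hq)
          rw [Real.dist_eq] at this
          linarith
    _ = c + 2 * M * (ρ A).toReal := by
        rw [integral_add (integrable_const c) (((integrable_const (1:ℝ)).indicator hAm).const_mul (2 * M)),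
          integral_const, integral_const_mul, integral_indicator_const (1:ℝ) hAm]
        simp [Measure.real]
    _ ≤ c + 2 * M * θ := by
        have := ENNReal.toReal_le_of_le_ofReal hθ hρA
        nlinarith [ENNReal.toReal_nonneg (a := ρ A)]

end StmtTwoAux

private lemma tendsto_integral_of_Wl {E : Type*} [MeasurableSpace E] [PseudoMetricSpace E]
    [OpensMeasurableSpace E] [SecondCountableTopology E]
    {ℓ : ℝ} (hℓ : 0 ≤ ℓ) {κ : ℕ → Measure E} {η : Measure E}
    (hconv : Filter.Tendsto (fun N => Paper.Wl ℓ (κ N) η) Filter.atTop (nhds 0))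
    {f : E → ℝ} (hf : UniformContinuous f) {M : ℝ} (hM0 : 0 ≤ M) (hM : ∀ x, |f x| ≤ M) :
    Filter.Tendsto (fun N => ∫ x, f x ∂(κ N)) Filter.atTop (nhds (∫ x, f x ∂η)) := by
  rw [Metric.tendsto_atTop]
  intro ε hε
  obtain ⟨δ, hδ, hδf⟩ := Metric.uniformContinuous_iff.mp hf (ε / 4) (by positivity)
  set θ := ε / (4 * (2 * M + 1)) with hθdef
  have hθpos : 0 < θ := by positivity
  have hMθ : 2 * M * θ ≤ ε / 4 := by
    rw [hθdef, mul_div_assoc']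
    rw [div_le_div_iff₀ (by positivity) (by norm_num : (0:ℝ) < 4)]
    nlinarith [mul_nonneg hM0 hε.le]
  have htpos : (0:ℝ≥0∞) < (if ℓ = 0 then ENNReal.ofReal (min 1 δ * θ)
      else ENNReal.ofReal (δ ^ ℓ * θ) ^ (1 / max ℓ 1)) := by
    split_ifs with h0
    · refine ENNReal.ofReal_pos.mpr ?_
      have : (0:ℝ) < min 1 δ := lt_min one_pos hδ
      positivity
    · refine ENNReal.rpow_pos (ENNReal.ofReal_pos.mpr ?_) ENNReal.ofReal_ne_top
      have : (0:ℝ) < δ ^ ℓ := Real.rpow_pos_of_pos hδ ℓ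
      positivity
  have hev := hconv.eventually_lt_const htpos
  rw [Filter.eventually_atTop] at hev
  obtain ⟨N0, hN0⟩ := hev
  refine ⟨N0, fun n hn => ?_⟩
  have hN := hN0 n hn
  rw [Paper.Wl] at hN
  obtain ⟨ρ, hρlt⟩ := iInf_lt_iff.mp hN
  obtain ⟨hρmem, hcost⟩ := iInf_lt_iff.mp hρlt
  obtain ⟨hprob, hfst, hsnd⟩ := hρmem
  have hAm : MeasurableSet {q : E × E | δ ≤ dist q.1 q.2} :=
    measurableSet_le measurable_const continuous_dist.measurable
  have hρA : ρ {q : E × E | δ ≤ dist q.1 q.2} ≤ ENNReal.ofReal θ := by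
    by_cases h0 : ℓ = 0
    · simp only [if_pos h0] at hcost
      exact meas_le_aux ρ hAm (lt_min one_pos hδ)
        (fun q hq => min_le_min le_rfl hq) hcost
    · have hl : 0 < ℓ := lt_of_le_of_ne hℓ (Ne.symm h0)
      simp only [if_neg h0] at hcost
      have hm : (0:ℝ) < max ℓ 1 := lt_max_of_lt_right one_pos
      have hcost' : ∫⁻ q, ENNReal.ofReal (dist q.1 q.2 ^ ℓ) ∂ρ < ENNReal.ofReal (δ ^ ℓ * θ) := by
        have h2 := ENNReal.rpow_lt_rpow hcost hm
        rwa [← ENNReal.rpow_mul, ← ENNReal.rpow_mul, one_div_mul_cancel hm.ne',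
          ENNReal.rpow_one, ENNReal.rpow_one] at h2
      exact meas_le_aux ρ hAm (Real.rpow_pos_of_pos hδ ℓ)
        (fun q hq => Real.rpow_le_rpow hδ.le hq hℓ) hcost'
  have hfin := dist_integral_le_of_coupling hprob hfst hsnd hf.continuous hM0 hM
    (by positivity : (0:ℝ) ≤ ε / 4) (fun a b hab => hδf hab) hθpos.le hρA
  calc dist (∫ x, f x ∂(κ n)) (∫ x, f x ∂η) ≤ ε / 4 + 2 * M * θ := hfin
    _ ≤ ε / 4 + ε / 4 := by linarith
    _ < ε := by linarith

private lemma integrable_one_add_rpow {E : Type*} [MeasurableSpace E] [NormedAddCommGroup E]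
    [OpensMeasurableSpace E] {ℓ : ℝ} {m : Measure E} (hm : Paper.MemP ℓ m) :
    Integrable (fun x => 1 + ‖x‖ ^ ℓ) m := by
  haveI := hm.1
  refine (integrable_const (1:ℝ)).add ⟨?_, ?_⟩
  · exact (measurable_norm.pow_const ℓ).aestronglyMeasurable
  · rw [hasFiniteIntegral_iff_ofReal
      (Filter.Eventually.of_forall fun x => Real.rpow_nonneg (norm_nonneg x) ℓ)]
    exact hm.2

private lemma cs_integral {α : Type*} [MeasurableSpace α] (ρ : Measure α) {f g : α → ℝ}
    (hf : MemLp f 2 ρ) (hg : MemLp g 2 ρ) :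
    Integrable (fun x => f x * g x) ρ ∧
      |∫ x, f x * g x ∂ρ| ≤
        (∫ x, f x ^ 2 ∂ρ) ^ ((1:ℝ)/2) * (∫ x, g x ^ 2 ∂ρ) ^ ((1:ℝ)/2) := by
  have hpqr : (1:ℝ≥0∞) / 1 = 1 / 2 + 1 / 2 := by
    rw [ENNReal.add_halves, one_div_one]
  have hint : Integrable (fun x => f x * g x) ρ := by
    have h := hg.smul (𝕜 := ℝ) (r := 1) hf
    have h2 := memLp_one_iff_integrable.mp h
    exact h2
  refine ⟨hint, ?_⟩
  have h2 : (2:ℝ).HolderConjugate 2 := Real.HolderConjugate.two_two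
  have hf2 : MemLp f (ENNReal.ofReal 2) ρ := by rwa [ENNReal.ofReal_ofNat]
  have hg2 : MemLp g (ENNReal.ofReal 2) ρ := by rwa [ENNReal.ofReal_ofNat]
  have key := MeasureTheory.integral_mul_norm_le_Lp_mul_Lq h2 hf2 hg2
  have hsq : ∀ (h : α → ℝ) (a : α), ‖h a‖ ^ (2:ℝ) = h a ^ 2 := fun h a => by
    rw [Real.norm_eq_abs, show (2:ℝ) = ((2:ℕ):ℝ) by norm_num, Real.rpow_natCast, sq_abs]
  calc |∫ x, f x * g x ∂ρ| ≤ ∫ x, ‖f x‖ * ‖g x‖ ∂ρ := by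
        simpa [Real.norm_eq_abs, abs_mul] using
          norm_integral_le_integral_norm (fun x => f x * g x) (μ := ρ)
    _ ≤ (∫ a, ‖f a‖ ^ (2:ℝ) ∂ρ) ^ ((1:ℝ)/2) * (∫ a, ‖g a‖ ^ (2:ℝ) ∂ρ) ^ ((1:ℝ)/2) := key
    _ = (∫ x, f x ^ 2 ∂ρ) ^ ((1:ℝ)/2) * (∫ x, g x ^ 2 ∂ρ) ^ ((1:ℝ)/2) := by
        rw [integral_congr_ae (Filter.Eventually.of_forall fun a => hsq f a),
          integral_congr_ae (Filter.Eventually.of_forall fun a => hsq g a)]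

private lemma key_ineq {d : ℕ} {ℓ : ℝ} (hℓ : 0 ≤ ℓ) {μ : Measure (Euc d)}
    {ν : ℕ → Measure (Euc d)} (hν : ∀ i, Paper.MemP ℓ (ν i)) {η : Measure (Euc d × Euc d)}
    (hη1 : η.map Prod.fst = μ)
    (hconv : Filter.Tendsto
      (fun N : ℕ => Paper.Wl ℓ ((N : ℝ≥0∞)⁻¹ • ∑ i ∈ Finset.range N, (ν i).prod (ν i)) η)
      Filter.atTop (nhds 0))
    {g' : Euc d → ℝ} (hc : Continuous g') (hcs : HasCompactSupport g') :
    (∫ x, g' x ∂μ) ^ 2 ≤ ∫ p : Euc d × Euc d, g' p.1 * g' p.2 ∂η := by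
  obtain ⟨M0, hM0⟩ := hcs.exists_bound_of_continuous hc
  set M := max M0 0 with hMdef
  have hM0' : (0:ℝ) ≤ M := le_max_right _ _
  have hMb : ∀ x, |g' x| ≤ M := fun x => le_trans (by simpa [Real.norm_eq_abs] using hM0 x) (le_max_left _ _)
  have hu : UniformContinuous g' := hcs.uniformContinuous_of_continuous hc
  have huf1 : UniformContinuous (fun p : Euc d × Euc d => g' p.1) := hu.comp uniformContinuous_fst
  have hh'c : Continuous (fun p : Euc d × Euc d => g' p.1 * g' p.2) :=
    (hc.comp continuous_fst).mul (hc.comp continuous_snd)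
  have hh'cs : HasCompactSupport (fun p : Euc d × Euc d => g' p.1 * g' p.2) := by
    refine HasCompactSupport.intro (hcs.prod hcs) fun p hp => ?_
    rcases not_and_or.mp (by simpa [Set.mem_prod] using hp) with h | h
    · rw [image_eq_zero_of_notMem_tsupport h, zero_mul]
    · rw [image_eq_zero_of_notMem_tsupport h, mul_zero]
  have hh'u : UniformContinuous (fun p : Euc d × Euc d => g' p.1 * g' p.2) :=
    hh'cs.uniformContinuous_of_continuous hh'c
  have hMb1 : ∀ p : Euc d × Euc d, |g' p.1| ≤ M := fun p => hMb p.1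
  have hMb2 : ∀ p : Euc d × Euc d, |g' p.1 * g' p.2| ≤ M * M := fun p => by
    rw [abs_mul]
    exact mul_le_mul (hMb p.1) (hMb p.2) (abs_nonneg _) hM0'
  have L1 := tendsto_integral_of_Wl hℓ hconv huf1 hM0' hMb1
  have L2 := tendsto_integral_of_Wl hℓ hconv hh'u (mul_nonneg hM0' hM0') hMb2
  have hev : ∀ᶠ N : ℕ in Filter.atTop,
      (∫ p : Euc d × Euc d, g' p.1 ∂((N : ℝ≥0∞)⁻¹ • ∑ i ∈ Finset.range N, (ν i).prod (ν i))) ^ 2 ≤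
        ∫ p : Euc d × Euc d, g' p.1 * g' p.2
          ∂((N : ℝ≥0∞)⁻¹ • ∑ i ∈ Finset.range N, (ν i).prod (ν i)) := by
    filter_upwards [Filter.eventually_ge_atTop 1] with N hN
    have hpi : ∀ i, IsProbabilityMeasure ((ν i).prod (ν i)) := fun i => by
      haveI := (hν i).1; infer_instance
    have hi1 : ∀ i, Integrable (fun p : Euc d × Euc d => g' p.1) ((ν i).prod (ν i)) := fun i => by
      haveI := hpi i
      exact ⟨(hc.comp continuous_fst).aestronglyMeasurable,
        HasFiniteIntegral.of_bounded (C := M)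
          (Filter.Eventually.of_forall fun p => by simpa [Real.norm_eq_abs] using hMb p.1)⟩
    have hi2 : ∀ i, Integrable (fun p : Euc d × Euc d => g' p.1 * g' p.2) ((ν i).prod (ν i)) :=
      fun i => by
      haveI := hpi i
      exact ⟨hh'c.aestronglyMeasurable,
        HasFiniteIntegral.of_bounded (C := M * M)
          (Filter.Eventually.of_forall fun p => by simpa [Real.norm_eq_abs, abs_mul] using hMb2 p)⟩
    have eInt : ∀ (F : Euc d × Euc d → ℝ), (∀ i, Integrable F ((ν i).prod (ν i))) →
        ∫ p, F p ∂((N : ℝ≥0∞)⁻¹ • ∑ i ∈ Finset.range N, (ν i).prod (ν i)) =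
          (N:ℝ)⁻¹ * ∑ i ∈ Finset.range N, ∫ p, F p ∂((ν i).prod (ν i)) := by
      intro F hF
      rw [integral_smul_measure, integral_finset_sum_measure (fun i _ => hF i)]
      simp [ENNReal.toReal_inv]
    have e1 : ∀ i, ∫ p : Euc d × Euc d, g' p.1 ∂((ν i).prod (ν i)) = ∫ x, g' x ∂(ν i) := fun i => by
      haveI := (hν i).1
      calc ∫ p : Euc d × Euc d, g' p.1 ∂((ν i).prod (ν i))
          = ∫ x, g' x ∂(((ν i).prod (ν i)).map Prod.fst) :=
            (integral_map measurable_fst.aemeasurable hc.aestronglyMeasurable).symm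
        _ = ∫ x, g' x ∂(ν i) := by rw [Measure.map_fst_prod]; simp
    have e2 : ∀ i, ∫ p : Euc d × Euc d, g' p.1 * g' p.2 ∂((ν i).prod (ν i)) =
        (∫ x, g' x ∂(ν i)) ^ 2 := fun i => by
      haveI := (hν i).1
      rw [integral_prod_mul (μ := ν i) (ν := ν i) g' g', sq]
    rw [eInt _ hi1, eInt _ hi2]
    simp_rw [e1, e2]
    have hN' : (0:ℝ) < N := by exact_mod_cast Nat.lt_of_lt_of_le Nat.zero_lt_one hN
    set S := ∑ i ∈ Finset.range N, ∫ x, g' x ∂(ν i) with hS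
    set Q := ∑ i ∈ Finset.range N, (∫ x, g' x ∂(ν i)) ^ 2 with hQ
    have cheb : S ^ 2 ≤ (N:ℝ) * Q := by
      have := sq_sum_le_card_mul_sum_sq (s := Finset.range N)
        (f := fun i => ∫ x, g' x ∂(ν i))
      simpa [hS, hQ] using this
    have h6 : ((N:ℝ)⁻¹ * S) ^ 2 = (N:ℝ)⁻¹ * (N:ℝ)⁻¹ * S ^ 2 := by ring
    rw [h6]
    calc (N:ℝ)⁻¹ * (N:ℝ)⁻¹ * S ^ 2 ≤ (N:ℝ)⁻¹ * (N:ℝ)⁻¹ * ((N:ℝ) * Q) := by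
          apply mul_le_mul_of_nonneg_left cheb (by positivity)
      _ = (N:ℝ)⁻¹ * Q := by field_simp
  have hlim := le_of_tendsto_of_tendsto (L1.pow 2) L2 hev
  have hfst : ∫ x, g' x ∂μ = ∫ p : Euc d × Euc d, g' p.1 ∂η := by
    rw [← hη1]
    exact (integral_map measurable_fst.aemeasurable hc.aestronglyMeasurable)
  rw [hfst]
  exact hlim

set_option maxHeartbeats 1000000 in
/-- variance inequality for the asymptotic variance. -/
theorem stmt2 {d : ℕ} (ℓ : ℝ) (hℓ : 0 ≤ ℓ)
    (μ : Measure (Euc d)) (hμ : MemP ℓ μ)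
    (ν : ℕ → Measure (Euc d)) (hν : ∀ i, MemP ℓ (ν i))
    (η : Measure (Euc d × Euc d)) (hη : MemP ℓ η)
    (hη1 : η.map Prod.fst = μ) (hη2 : η.map Prod.snd = μ)
    (hconv : Tendsto
      (fun N : ℕ => Wl ℓ ((N : ℝ≥0∞)⁻¹ • ∑ i ∈ Finset.range N, (ν i).prod (ν i)) η)
      atTop (𝓝 0))
    (g : Euc d → ℝ) (hgm : Measurable g) (hgc : ∀ᵐ x ∂μ, ContinuousAt g x)
    (C : ℝ) (hg : ∀ x, |g x| ≤ C * (1 + ‖x‖ ^ (ℓ / 2))) :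
    (∫ x, g x ∂μ) ^ 2 ≤ (∫ p, g p.1 * g p.2 ∂η) ∧
      (∫ x, (g x) ^ 2 ∂μ) - (∫ p, g p.1 * g p.2 ∂η) ≤
        (∫ x, (g x) ^ 2 ∂μ) - (∫ x, g x ∂μ) ^ 2 := by
  haveI hμp : IsProbabilityMeasure μ := hμ.1
  haveI hηp : IsProbabilityMeasure η := hη.1
  -- square integrability of g
  have hgsq_int : Integrable (fun x => g x ^ 2) μ := by
    refine Integrable.mono' ((integrable_one_add_rpow hμ).const_mul (2 * C ^ 2))
      ((hgm.pow_const 2).aestronglyMeasurable) (Filter.Eventually.of_forall fun x => ?_)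
    have h1 := hg x
    have h2 : (0:ℝ) ≤ ‖x‖ ^ (ℓ / 2) := Real.rpow_nonneg (norm_nonneg x) _
    have h3 : (‖x‖ ^ (ℓ / 2)) ^ (2:ℕ) = ‖x‖ ^ ℓ := by
      rw [← Real.rpow_natCast (‖x‖ ^ (ℓ / 2)) 2, ← Real.rpow_mul (norm_nonneg x)]
      norm_num
    have h4 : ‖g x ^ 2‖ = |g x| ^ 2 := by rw [Real.norm_eq_abs, abs_pow]
    rw [h4]
    calc |g x| ^ 2 ≤ (C * (1 + ‖x‖ ^ (ℓ / 2))) ^ 2 := by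
          have := abs_nonneg (g x); nlinarith
      _ ≤ 2 * C ^ 2 * (1 + ‖x‖ ^ ℓ) := by
          nlinarith [h3, h2, sq_nonneg C, sq_nonneg (1 - ‖x‖ ^ (ℓ / 2)), sq_nonneg (C * (1 - ‖x‖ ^ (ℓ / 2)))]
  have hg2 : MemLp g 2 μ := (memLp_two_iff_integrable_sq hgm.aestronglyMeasurable).mpr hgsq_int
  -- lifting lemmas
  have lift_fst : ∀ {φ : Euc d → ℝ}, MemLp φ 2 μ →
      MemLp (fun p : Euc d × Euc d => φ p.1) 2 η := by
    intro φ hφ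
    have h1 : AEStronglyMeasurable φ (η.map Prod.fst) := by rw [hη1]; exact hφ.1
    have h2 : MemLp φ 2 (η.map Prod.fst) := by rwa [hη1]
    exact (memLp_map_measure_iff h1 measurable_fst.aemeasurable).mp h2
  have lift_snd : ∀ {φ : Euc d → ℝ}, MemLp φ 2 μ →
      MemLp (fun p : Euc d × Euc d => φ p.2) 2 η := by
    intro φ hφ
    have h1 : AEStronglyMeasurable φ (η.map Prod.snd) := by rw [hη2]; exact hφ.1
    have h2 : MemLp φ 2 (η.map Prod.snd) := by rwa [hη2]
    exact (memLp_map_measure_iff h1 measurable_snd.aemeasurable).mp h2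
  have int_fst : ∀ (φ : Euc d → ℝ), AEStronglyMeasurable φ μ →
      ∫ p : Euc d × Euc d, φ p.1 ∂η = ∫ x, φ x ∂μ := by
    intro φ hφ
    have h1 : AEStronglyMeasurable φ (η.map Prod.fst) := by rwa [hη1]
    rw [← hη1]
    exact (integral_map measurable_fst.aemeasurable h1).symm
  have int_snd : ∀ (φ : Euc d → ℝ), AEStronglyMeasurable φ μ →
      ∫ p : Euc d × Euc d, φ p.2 ∂η = ∫ x, φ x ∂μ := by
    intro φ hφ
    have h1 : AEStronglyMeasurable φ (η.map Prod.snd) := by rwa [hη2]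
    rw [← hη2]
    exact (integral_map measurable_snd.aemeasurable h1).symm
  have main : (∫ x, g x ∂μ) ^ 2 ≤ ∫ p : Euc d × Euc d, g p.1 * g p.2 ∂η := by
    refine le_of_forall_pos_le_add fun ε0 hε0 => ?_
    set a := ∫ x, g x ∂μ with ha
    set I := ∫ p : Euc d × Euc d, g p.1 * g p.2 ∂η with hI
    set B := (∫ x, g x ^ 2 ∂μ) ^ ((1:ℝ)/2) with hB
    have hBnn : 0 ≤ B := Real.rpow_nonneg (integral_nonneg fun x => sq_nonneg _) _
    set D := 2 * B + 2 * |a| + 6 with hD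
    have hDpos : 0 < D := by positivity
    set ε := min 1 (ε0 / D) with hεdef
    have hεpos : 0 < ε := lt_min one_pos (by positivity)
    have hε1 : ε ≤ 1 := min_le_left _ _
    have hεD : ε * D ≤ ε0 := by
      have h1 : ε ≤ ε0 / D := min_le_right _ _
      calc ε * D ≤ (ε0 / D) * D := mul_le_mul_of_nonneg_right h1 hDpos.le
        _ = ε0 := by field_simp
    obtain ⟨g', hg'supp, hg'near, hg'cont, hg'mem⟩ :=
      hg2.exists_hasCompactSupport_eLpNorm_sub_le ENNReal.ofNat_ne_top
        (ε := ENNReal.ofReal ε) (ENNReal.ofReal_pos.mpr hεpos).ne'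
    set u := g - g' with hudef
    have hu2 : MemLp u 2 μ := hg2.sub hg'mem
    have hum : AEStronglyMeasurable u μ :=
      hgm.aestronglyMeasurable.sub hg'cont.aestronglyMeasurable
    set su := (∫ x, u x ^ 2 ∂μ) ^ ((1:ℝ)/2) with hsudef
    have hsunn : 0 ≤ su := Real.rpow_nonneg (integral_nonneg fun x => sq_nonneg _) _
    -- su ≤ ε
    have hsu : su ≤ ε := by
      have h1 := hu2.eLpNorm_eq_integral_rpow_norm two_ne_zero ENNReal.ofNat_ne_top
      rw [h1] at hg'near
      have h2 := (ENNReal.ofReal_le_ofReal_iff hεpos.le).mp hg'near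
      have h3 : ∫ x, ‖u x‖ ^ (2:ℝ≥0∞).toReal ∂μ = ∫ x, u x ^ 2 ∂μ := by
        refine integral_congr_ae (Filter.Eventually.of_forall fun x => ?_)
        have hx : ‖u x‖ ^ ((2:ℝ≥0∞)).toReal = u x ^ 2 := by
          rw [show ((2:ℝ≥0∞)).toReal = ((2:ℕ):ℝ) from by norm_num, Real.rpow_natCast,
            Real.norm_eq_abs, sq_abs]
        exact hx
      rw [h3] at h2
      have h4 : ((2:ℝ≥0∞)).toReal⁻¹ = (1:ℝ)/2 := by norm_num
      rw [h4] at h2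
      exact h2
    -- CS bounds
    have csT1 := cs_integral η (lift_fst hg2) (lift_snd hu2)
    have csT2 := cs_integral η (lift_fst hu2) (lift_snd hg2)
    have csT3 := cs_integral η (lift_fst hu2) (lift_snd hu2)
    have csI := cs_integral η (lift_fst hg2) (lift_snd hg2)
    have csW := cs_integral μ hu2 (memLp_const (1:ℝ))
    set T1 := ∫ p : Euc d × Euc d, g p.1 * u p.2 ∂η with hT1def
    set T2 := ∫ p : Euc d × Euc d, u p.1 * g p.2 ∂η with hT2def
    set T3 := ∫ p : Euc d × Euc d, u p.1 * u p.2 ∂η with hT3def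
    set w := ∫ x, u x ∂μ with hwdef
    -- transfers of square integrals
    have Eg1 : ∫ p : Euc d × Euc d, g p.1 ^ 2 ∂η = ∫ x, g x ^ 2 ∂μ :=
      int_fst (fun x => g x ^ 2) hgsq_int.1
    have Eg2 : ∫ p : Euc d × Euc d, g p.2 ^ 2 ∂η = ∫ x, g x ^ 2 ∂μ :=
      int_snd (fun x => g x ^ 2) hgsq_int.1
    have Eu1 : ∫ p : Euc d × Euc d, u p.1 ^ 2 ∂η = ∫ x, u x ^ 2 ∂μ :=
      int_fst (fun x => u x ^ 2) hu2.integrable_sq.1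
    have Eu2 : ∫ p : Euc d × Euc d, u p.2 ^ 2 ∂η = ∫ x, u x ^ 2 ∂μ :=
      int_snd (fun x => u x ^ 2) hu2.integrable_sq.1
    have hT1b : |T1| ≤ B * su := by
      have h := csT1.2
      calc |T1| ≤ (∫ p : Euc d × Euc d, g p.1 ^ 2 ∂η) ^ ((1:ℝ)/2) *
            (∫ p : Euc d × Euc d, u p.2 ^ 2 ∂η) ^ ((1:ℝ)/2) := h
        _ = B * su := by rw [Eg1, Eu2]
    have hT2b : |T2| ≤ su * B := by
      have h := csT2.2
      calc |T2| ≤ (∫ p : Euc d × Euc d, u p.1 ^ 2 ∂η) ^ ((1:ℝ)/2) *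
            (∫ p : Euc d × Euc d, g p.2 ^ 2 ∂η) ^ ((1:ℝ)/2) := h
        _ = su * B := by rw [Eu1, Eg2]
    have hT3b : |T3| ≤ su * su := by
      have h := csT3.2
      calc |T3| ≤ (∫ p : Euc d × Euc d, u p.1 ^ 2 ∂η) ^ ((1:ℝ)/2) *
            (∫ p : Euc d × Euc d, u p.2 ^ 2 ∂η) ^ ((1:ℝ)/2) := h
        _ = su * su := by rw [Eu1, Eu2]
    have hwb : |w| ≤ su := by
      have h := csW.2
      have e1 : ∫ x, u x * 1 ∂μ = w := by simp [hwdef]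
      have e2 : ∫ x, (1:ℝ) ^ 2 ∂μ = 1 := by simp
      rw [e1, e2, Real.one_rpow, mul_one] at h
      exact h
    -- integrabilities
    have hIint : Integrable (fun p : Euc d × Euc d => g p.1 * g p.2) η := csI.1
    have hT1int : Integrable (fun p : Euc d × Euc d => g p.1 * u p.2) η := csT1.1
    have hT2int : Integrable (fun p : Euc d × Euc d => u p.1 * g p.2) η := csT2.1
    have hT3int : Integrable (fun p : Euc d × Euc d => u p.1 * u p.2) η := csT3.1
    -- decomposition of I'
    have hfun : ∀ p : Euc d × Euc d, g' p.1 * g' p.2 =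
        g p.1 * g p.2 - g p.1 * u p.2 - u p.1 * g p.2 + u p.1 * u p.2 := fun p => by
      simp only [hudef, Pi.sub_apply]; ring
    have hI'eq : ∫ p : Euc d × Euc d, g' p.1 * g' p.2 ∂η = I - T1 - T2 + T3 := by
      have s1 : Integrable (fun p : Euc d × Euc d => g p.1 * g p.2 - g p.1 * u p.2) η :=
        hIint.sub hT1int
      have s2 : Integrable
          (fun p : Euc d × Euc d => g p.1 * g p.2 - g p.1 * u p.2 - u p.1 * g p.2) η :=
        s1.sub hT2int
      have e1 : ∫ p : Euc d × Euc d,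
            (g p.1 * g p.2 - g p.1 * u p.2 - u p.1 * g p.2 + u p.1 * u p.2) ∂η
          = (∫ p : Euc d × Euc d, (g p.1 * g p.2 - g p.1 * u p.2 - u p.1 * g p.2) ∂η) + T3 :=
        integral_add s2 hT3int
      have e2 : ∫ p : Euc d × Euc d, (g p.1 * g p.2 - g p.1 * u p.2 - u p.1 * g p.2) ∂η
          = (∫ p : Euc d × Euc d, (g p.1 * g p.2 - g p.1 * u p.2) ∂η) - T2 :=
        integral_sub s1 hT2int
      have e3 : ∫ p : Euc d × Euc d, (g p.1 * g p.2 - g p.1 * u p.2) ∂η = I - T1 :=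
        integral_sub hIint hT1int
      rw [integral_congr_ae (Filter.Eventually.of_forall hfun), e1, e2, e3]
    -- key inequality for g'
    have hkey : (∫ x, g' x ∂μ) ^ 2 ≤ ∫ p : Euc d × Euc d, g' p.1 * g' p.2 ∂η :=
      key_ineq hℓ hν hη1 hconv hg'cont hg'supp
    have hweq : w = a - ∫ x, g' x ∂μ := by
      rw [hwdef, hudef, ha]
      exact integral_sub (hg2.integrable one_le_two) (hg'mem.integrable one_le_two)
    have hg'eq : ∫ x, g' x ∂μ = a - w := by rw [hweq]; ring
    rw [hg'eq, hI'eq] at hkey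
    -- final arithmetic
    have hεD' : ε * (2 * B + 2 * |a| + 6) ≤ ε0 := by rw [← hD]; exact hεD
    have haw : a * w ≤ |a| * ε := by
      refine le_trans (le_abs_self _) ?_
      rw [abs_mul]
      exact mul_le_mul_of_nonneg_left (le_trans hwb hsu) (abs_nonneg a)
    have hBsu : B * su ≤ B * ε := mul_le_mul_of_nonneg_left hsu hBnn
    have hsuB : su * B ≤ B * ε := by rw [mul_comm]; exact hBsu
    have hsusu : su * su ≤ ε := by
      have h1 : su * su ≤ ε * ε := mul_le_mul hsu hsu hsunn hεpos.le
      have h2 : ε * ε ≤ 1 * ε := mul_le_mul_of_nonneg_right hε1 hεpos.le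
      rw [one_mul] at h2
      linarith
    have p1 := abs_le.mp hT1b
    have p2 := abs_le.mp hT2b
    have p3 := abs_le.mp hT3b
    have hexp : a ^ 2 = (a - w) ^ 2 + 2 * (a * w) - w ^ 2 := by ring
    linarith [hexp, hkey, haw, sq_nonneg w, p1.1, p2.1, p3.2, hBsu, hsuB, hsusu, hεD', hεpos.le]
  refine ⟨main, ?_⟩
  linarith [main]
end
end

section
/- Let (X_i)_{i≥1} be a Markov chain on ℝ^d with transition kernel P, let V : ℝ^d → [0,∞) be measurable, and let Φ_N = √N(U(μ_N) − U(μ)) where μ_N = (1/N)Σ_{i=1}^N δ_{X_i} and U, μ are fixed. Suppose there is a probability measure 𝒢 on ℝ (not depending on the initial law) such that for every initial law ν₁ with ν₁(V) < ∞, the sequence Φ_N converges in distribution to 𝒢 under the law ℙ_{ν₁} of the chain started from ν₁. Then for every initial probability measure ν₁ on ℝ^d (possibly with ν₁(V) = ∞), Φ_N converges in distribution to 𝒢 under ℙ_{ν₁}. -/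
open MeasureTheory ProbabilityTheory Filter ENNReal Topology

noncomputable section

open Paper



section AuxForStmt11

open MeasureTheory
open scoped NNReal

variable {Ω : Type*} [MeasurableSpace Ω]

/-- Integrability of pointwise bounded a.e.-strongly measurable functions. -/
lemma my_bdd_integrable (μ : Measure Ω) [IsFiniteMeasure μ] {φ : Ω → ℝ}
    (hφ : AEStronglyMeasurable φ μ) {C : ℝ} (h : ∀ ω, |φ ω| ≤ C) : Integrable φ μ :=
  (integrable_const C).mono' hφ (Filter.Eventually.of_forall fun ω => by
    simpa [Real.norm_eq_abs] using h ω)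

lemma my_map_withDensity {E : Type*} [MeasurableSpace E] (Pr : Measure Ω)
    {X0 : Ω → E} (hX0 : Measurable X0) {ρ : E → ℝ≥0∞} (hρ : Measurable ρ) :
    (Pr.withDensity fun ω => ρ (X0 ω)).map X0 = (Pr.map X0).withDensity ρ := by
  ext s hs
  rw [Measure.map_apply hX0 hs, withDensity_apply _ (hX0 hs), withDensity_apply _ hs,
    setLIntegral_map hs hρ hX0]

lemma my_ac_reweight (Pr : Measure Ω) {W : Ω → ℝ≥0∞} (hW : Measurable W)
    (hWpos : ∀ ω, W ω ≠ 0) {Z : ℝ≥0∞} (hZtop : Z ≠ ⊤) :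
    Pr ≪ Z⁻¹ • Pr.withDensity W := by
  intro s hs
  rw [Measure.smul_apply, smul_eq_mul, mul_eq_zero] at hs
  have hs' : Pr.withDensity W s = 0 := by
    rcases hs with h | h
    · exact absurd h (ENNReal.inv_ne_zero.mpr hZtop)
    · exact h
  set t := toMeasurable (Pr.withDensity W) s with ht
  have hts : s ⊆ t := subset_toMeasurable _ _
  have htm : MeasurableSet t := measurableSet_toMeasurable _ _
  have ht0 : (Pr.withDensity W) t = 0 := by
    rw [ht, measure_toMeasurable]; exact hs'
  rw [withDensity_apply _ htm] at ht0
  have hae := (setLIntegral_eq_zero_iff htm hW).mp ht0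
  have hPt : Pr t = 0 :=
    measure_eq_zero_iff_ae_notMem.mpr (hae.mono fun ω hω hmem => hWpos ω (hω hmem))
  exact measure_mono_null hts hPt

/-- Reweighting a Markov chain by a bounded positive function of the initial position. -/
lemma my_markov_reweight {d : ℕ} {Pr : Measure Ω} [IsProbabilityMeasure Pr]
    {X : ℕ → Ω → Euc d} {ν₁ : Measure (Euc d)} {P : Kernel (Euc d) (Euc d)}
    [IsMarkovKernel P] (hX : Paper.IsMarkovChain Pr X ν₁ P)
    (W : Euc d → ℝ≥0) (hW : Measurable W) (hW1 : ∀ x, W x ≤ 1)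
    (hZ0 : (∫⁻ ω, (W (X 0 ω) : ℝ≥0∞) ∂Pr) ≠ 0) :
    Paper.IsMarkovChain
      ((∫⁻ ω, (W (X 0 ω) : ℝ≥0∞) ∂Pr)⁻¹ • Pr.withDensity fun ω => (W (X 0 ω) : ℝ≥0∞)) X
      ((∫⁻ ω, (W (X 0 ω) : ℝ≥0∞) ∂Pr)⁻¹ • ν₁.withDensity fun x => (W x : ℝ≥0∞)) P ∧
    IsProbabilityMeasure
      ((∫⁻ ω, (W (X 0 ω) : ℝ≥0∞) ∂Pr)⁻¹ • Pr.withDensity fun ω => (W (X 0 ω) : ℝ≥0∞)) := by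
  set Z : ℝ≥0∞ := ∫⁻ ω, (W (X 0 ω) : ℝ≥0∞) ∂Pr with hZdef
  set Pr' : Measure Ω := Z⁻¹ • Pr.withDensity fun ω => (W (X 0 ω) : ℝ≥0∞) with hPr'def
  have hWm : Measurable fun ω => W (X 0 ω) := hW.comp (hX.1 0)
  have hZle : Z ≤ 1 := by
    rw [hZdef]
    calc ∫⁻ ω, (W (X 0 ω) : ℝ≥0∞) ∂Pr ≤ ∫⁻ _, 1 ∂Pr :=
          lintegral_mono fun ω => ENNReal.coe_le_one_iff.mpr (hW1 (X 0 ω))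
      _ = 1 := by simp
  have hZtop : Z ≠ ⊤ := (hZle.trans_lt ENNReal.one_lt_top).ne
  have hprob : IsProbabilityMeasure Pr' := by
    constructor
    rw [hPr'def, Measure.smul_apply, smul_eq_mul,
      withDensity_apply _ MeasurableSet.univ, Measure.restrict_univ, ← hZdef]
    exact ENNReal.inv_mul_cancel hZ0 hZtop
  refine ⟨⟨hX.1, ?_, ?_⟩, hprob⟩
  · rw [hPr'def, Measure.map_smul, my_map_withDensity Pr (hX.1 0) hW.coe_nnreal_ennreal,
      hX.2.1]
  intro i A hA
  have hm : MeasurableSpace.comap (fun ω (j : Fin (i + 1)) => X j.1 ω) MeasurableSpace.pi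
      ≤ _ := Measurable.comap_le (measurable_pi_lambda _ fun j => hX.1 j.1)
  haveI : IsProbabilityMeasure Pr' := hprob
  have hΦ : Measurable[MeasurableSpace.comap (fun ω (j : Fin (i + 1)) => X j.1 ω)
      MeasurableSpace.pi] (fun ω (j : Fin (i + 1)) => X j.1 ω) :=
    Measurable.of_comap_le le_rfl
  have hXm : ∀ j : Fin (i + 1),
      Measurable[MeasurableSpace.comap (fun ω (j : Fin (i + 1)) => X j.1 ω)
        MeasurableSpace.pi] (X j.1) := fun j => (measurable_pi_apply j).comp hΦ
  have hXi_m : Measurable[MeasurableSpace.comap (fun ω (j : Fin (i + 1)) => X j.1 ω)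
      MeasurableSpace.pi] (X i) := hXm ⟨i, Nat.lt_succ_self i⟩
  have hX0_m : Measurable[MeasurableSpace.comap (fun ω (j : Fin (i + 1)) => X j.1 ω)
      MeasurableSpace.pi] (X 0) := hXm ⟨0, Nat.succ_pos i⟩
  set g₀ : Ω → ℝ := fun ω => Set.indicator A (fun _ => (1 : ℝ)) (X (i + 1) ω) with hg₀def
  set h₀ : Ω → ℝ := fun ω => ((P (X i ω)) A).toReal with hh₀def
  have hgmeas : Measurable g₀ := (measurable_const.indicator hA).comp (hX.1 (i + 1))
  have hg1 : ∀ ω, |g₀ ω| ≤ 1 := fun ω => by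
    rw [hg₀def]
    by_cases h : X (i + 1) ω ∈ A <;>
      simp [Set.indicator_of_mem, Set.indicator_of_notMem, h]
  have hh_m : Measurable[MeasurableSpace.comap (fun ω (j : Fin (i + 1)) => X j.1 ω)
      MeasurableSpace.pi] h₀ := ((P.measurable_coe hA).comp hXi_m).ennreal_toReal
  have hhmeas : Measurable h₀ := ((P.measurable_coe hA).comp (hX.1 i)).ennreal_toReal
  have hh1 : ∀ ω, |h₀ ω| ≤ 1 := fun ω => by
    rw [hh₀def, abs_of_nonneg ENNReal.toReal_nonneg]
    calc ((P (X i ω)) A).toReal ≤ (1 : ℝ≥0∞).toReal :=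
          ENNReal.toReal_mono ENNReal.one_ne_top prob_le_one
      _ = 1 := by simp
  have hg_int : Integrable g₀ Pr := my_bdd_integrable Pr hgmeas.aestronglyMeasurable hg1
  have hg_int' : Integrable g₀ Pr' := my_bdd_integrable Pr' hgmeas.aestronglyMeasurable hg1
  refine ae_eq_condExp_of_forall_setIntegral_eq hm hg_int'
    (fun s hs hμs => (my_bdd_integrable Pr' hhmeas.aestronglyMeasurable hh1).integrableOn)
    (fun s hs hμs => ?_) (hh_m.stronglyMeasurable.aestronglyMeasurable)
  have hsm0 : MeasurableSet s := hm s hs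
  have hres : Pr'.restrict s
      = Z⁻¹ • ((Pr.restrict s).withDensity fun ω => ((W (X 0 ω) : ℝ≥0∞))) := by
    rw [hPr'def, Measure.restrict_smul, restrict_withDensity hsm0]
  rw [show (∫ ω in s, h₀ ω ∂Pr') = ∫ ω, h₀ ω ∂(Pr'.restrict s) from rfl,
    show (∫ ω in s, g₀ ω ∂Pr') = ∫ ω, g₀ ω ∂(Pr'.restrict s) from rfl, hres,
    integral_smul_measure, integral_smul_measure,
    integral_withDensity_eq_integral_smul hWm, integral_withDensity_eq_integral_smul hWm]
  congr 1
  simp only [NNReal.smul_def]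
  set w : Ω → ℝ := fun ω => (W (X 0 ω) : ℝ) with hwdef
  have hw_m0 : Measurable w := measurable_coe_nnreal_real.comp hWm
  have hw_sm : StronglyMeasurable[MeasurableSpace.comap
      (fun ω (j : Fin (i + 1)) => X j.1 ω) MeasurableSpace.pi] w :=
    Measurable.stronglyMeasurable (measurable_coe_nnreal_real.comp (hW.comp hX0_m))
  have hw1 : ∀ ω, |w ω| ≤ 1 := fun ω => by
    rw [hwdef, abs_of_nonneg (W (X 0 ω)).coe_nonneg]
    exact_mod_cast hW1 (X 0 ω)
  have hwg_int : Integrable (w * g₀) Pr :=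
    my_bdd_integrable Pr ((hw_m0.mul hgmeas).aestronglyMeasurable) (C := 1) fun ω => by
      simp only [Pi.mul_apply, abs_mul]
      exact mul_le_one₀ (hw1 ω) (abs_nonneg _) (hg1 ω)
  have hpull := condExp_mul_of_stronglyMeasurable_left (μ := Pr) hw_sm hwg_int hg_int
  have hmc := hX.2.2 i A hA
  calc ∫ ω in s, w ω * h₀ ω ∂Pr
      = ∫ ω in s, w ω * (Pr[g₀|MeasurableSpace.comap
          (fun ω (j : Fin (i + 1)) => X j.1 ω) MeasurableSpace.pi]) ω ∂Pr := by
        refine integral_congr_ae (ae_restrict_of_ae (hmc.mono fun ω hω => ?_))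
        exact congrArg (fun t => w ω * t) hω
    _ = ∫ ω in s, (Pr[w * g₀|MeasurableSpace.comap
          (fun ω (j : Fin (i + 1)) => X j.1 ω) MeasurableSpace.pi]) ω ∂Pr := by
        refine integral_congr_ae (ae_restrict_of_ae (hpull.symm.mono fun ω hω => ?_))
        exact hω
    _ = ∫ ω in s, (w * g₀) ω ∂Pr := setIntegral_condExp hm hwg_int hs
    _ = ∫ ω in s, w ω * g₀ ω ∂Pr := rfl

/-- If the sequence converges in distribution to a probability measure, then eventually the
random variables are a.e.-measurable. -/
lemma my_eventually_aemeasurable {Pr' : Measure Ω} [IsProbabilityMeasure Pr']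
    {Y : ℕ → Ω → ℝ} {G : Measure ℝ} [IsProbabilityMeasure G]
    (hcid : Paper.cid Pr' Y G) : ∀ᶠ N in Filter.atTop, AEMeasurable (Y N) Pr' := by
  by_contra hbad
  rw [Filter.not_eventually] at hbad
  have hcont : Continuous fun y : ℝ => y / (1 + |y|) :=
    continuous_id.div (continuous_const.add continuous_abs) fun y => by positivity
  have hFb : ∀ y : ℝ, ‖y / (1 + |y|)‖ ≤ 1 := fun y => by
    have h0 : (0 : ℝ) < 1 + |y| := by positivity
    rw [Real.norm_eq_abs, abs_div, abs_of_pos h0, div_le_one h0]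
    linarith [abs_nonneg y]
  set F : BoundedContinuousFunction ℝ ℝ :=
    BoundedContinuousFunction.ofNormedAddCommGroup _ hcont 1 hFb with hFdef
  have hFapp : ∀ y, F y = y / (1 + |y|) := fun y => rfl
  set ψ : ℝ → ℝ := fun z => z / (1 - |z|) with hψdef
  have hψm : Measurable ψ := measurable_id.div (measurable_const.sub measurable_abs)
  have hψF : ∀ y, ψ (F y) = y := by
    intro y
    have h0 : (0 : ℝ) < 1 + |y| := by positivity
    rw [hFapp]
    show (y / (1 + |y|)) / (1 - |y / (1 + |y|)|) = y
    rw [abs_div, abs_of_pos h0]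
    have h1 : 1 - |y| / (1 + |y|) = 1 / (1 + |y|) := by field_simp; ring
    rw [h1, one_div, div_eq_mul_inv, inv_inv]
    exact div_mul_cancel₀ y h0.ne'
  have hzero : ∀ N, ¬ AEMeasurable (Y N) Pr' →
      (∫ ω, F (Y N ω) ∂Pr') = 0 ∧ (∫ ω, (F + 1) (Y N ω) ∂Pr') = 0 := by
    intro N hN
    have hFn : ¬ AEStronglyMeasurable (fun ω => F (Y N ω)) Pr' := by
      intro hs
      apply hN
      refine ⟨fun ω => ψ (hs.mk _ ω), hψm.comp hs.stronglyMeasurable_mk.measurable, ?_⟩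
      filter_upwards [hs.ae_eq_mk] with ω hω
      calc Y N ω = ψ (F (Y N ω)) := (hψF _).symm
        _ = ψ (hs.mk _ ω) := by rw [← hω]
    constructor
    · exact integral_undef fun hInt => hFn hInt.1
    · refine integral_undef fun hInt => hFn ?_
      have h1 := hInt.1
      have hcoe : (fun ω => (F + 1) (Y N ω)) = fun ω => F (Y N ω) + 1 := by
        funext ω; simp
      rw [hcoe] at h1
      have h2 : (fun ω => F (Y N ω)) = (fun ω => F (Y N ω) + 1) - fun _ => (1 : ℝ) := by
        funext ω; simp
      rw [h2]
      exact h1.sub aestronglyMeasurable_const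
  have hfreq : ∃ᶠ N in Filter.atTop,
      (∫ ω, F (Y N ω) ∂Pr') = 0 ∧ (∫ ω, (F + 1) (Y N ω) ∂Pr') = 0 :=
    hbad.mono hzero
  have e1 : ∫ x, F x ∂G = 0 :=
    tendsto_nhds_unique_of_frequently_eq (hcid F) tendsto_const_nhds
      (hfreq.mono fun N h => h.1)
  have e2 : ∫ x, (F + 1) x ∂G = 0 :=
    tendsto_nhds_unique_of_frequently_eq (hcid (F + 1)) tendsto_const_nhds
      (hfreq.mono fun N h => h.2)
  have h1 : ∫ x, (F + 1) x ∂G = ∫ x, F x ∂G + 1 := by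
    have hc : (fun x => (F + 1) x) = fun x => F x + 1 := by funext x; simp
    rw [hc, integral_add (F.integrable G) (integrable_const 1)]
    simp
  rw [h1, e1] at e2
  norm_num at e2

/-- Comparison of the integral under a probability measure and under conditioning. -/
lemma my_integral_cond_bound (Pr : Measure Ω) [IsProbabilityMeasure Pr]
    {B : Set Ω} (hB : MeasurableSet B) (hB0 : Pr B ≠ 0)
    {g : Ω → ℝ} (hg : AEStronglyMeasurable g Pr) {C : ℝ} (hC0 : 0 ≤ C)
    (hgC : ∀ ω, |g ω| ≤ C) :
    |(∫ ω, g ω ∂Pr) - ∫ ω, g ω ∂((Pr B)⁻¹ • Pr.restrict B)| ≤ 2 * C * (Pr Bᶜ).toReal := by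
  set b : ℝ := (Pr B).toReal with hbdef
  set b' : ℝ := (Pr Bᶜ).toReal with hb'def
  have hb_pos : 0 < b := ENNReal.toReal_pos hB0 (measure_ne_top _ _)
  have hb'0 : 0 ≤ b' := ENNReal.toReal_nonneg
  have hsum : b + b' = 1 := by
    rw [hbdef, hb'def, ← ENNReal.toReal_add (measure_ne_top _ _) (measure_ne_top _ _),
      measure_add_measure_compl hB]
    simp
  have hint : Integrable g Pr := my_bdd_integrable Pr hg hgC
  have htot : (∫ ω, g ω ∂Pr) = (∫ ω in B, g ω ∂Pr) + ∫ ω in Bᶜ, g ω ∂Pr :=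
    (integral_add_compl hB hint).symm
  have hcm : (∫ ω, g ω ∂((Pr B)⁻¹ • Pr.restrict B)) = b⁻¹ * ∫ ω in B, g ω ∂Pr := by
    rw [integral_smul_measure, ENNReal.toReal_inv, smul_eq_mul]
  have hI1 : |∫ ω in B, g ω ∂Pr| ≤ C * b := by
    rw [← Real.norm_eq_abs]
    exact norm_setIntegral_le_of_norm_le_const_ae (measure_lt_top _ _)
      (Filter.Eventually.of_forall fun ω => by
        rw [Real.norm_eq_abs]; exact hgC ω)
  have hI2 : |∫ ω in Bᶜ, g ω ∂Pr| ≤ C * b' := by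
    rw [← Real.norm_eq_abs]
    exact norm_setIntegral_le_of_norm_le_const_ae (measure_lt_top _ _)
      (Filter.Eventually.of_forall fun ω => by
        rw [Real.norm_eq_abs]; exact hgC ω)
  have hbinv : b⁻¹ * b = 1 := inv_mul_cancel₀ hb_pos.ne'
  have hbinv1 : 1 ≤ b⁻¹ := by
    have hb1 : b ≤ 1 := by linarith
    nlinarith [inv_nonneg.mpr hb_pos.le]
  set I1 : ℝ := ∫ ω in B, g ω ∂Pr with hI1def
  set I2 : ℝ := ∫ ω in Bᶜ, g ω ∂Pr with hI2def
  have key : (∫ ω, g ω ∂Pr) - (∫ ω, g ω ∂((Pr B)⁻¹ • Pr.restrict B))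
      = (1 - b⁻¹) * I1 + I2 := by
    rw [htot, hcm]; ring
  rw [key]
  calc |(1 - b⁻¹) * I1 + I2| ≤ |(1 - b⁻¹) * I1| + |I2| := abs_add_le _ _
    _ = (b⁻¹ - 1) * |I1| + |I2| := by
        rw [abs_mul, abs_of_nonpos (by linarith : 1 - b⁻¹ ≤ 0)]
        ring_nf
    _ ≤ (b⁻¹ - 1) * (C * b) + C * b' := by
        have h1 : (b⁻¹ - 1) * |I1| ≤ (b⁻¹ - 1) * (C * b) :=
          mul_le_mul_of_nonneg_left hI1 (by linarith)
        linarith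
    _ = C * b' + C * b' := by
        have heq : (b⁻¹ - 1) * (C * b) = C * (b⁻¹ * b) - C * b := by ring
        have hcc : C * (b + b') = C * 1 := by rw [hsum]
        rw [heq, hbinv]
        linarith [hcc]
    _ = 2 * C * b' := by ring

end AuxForStmt11

open scoped NNReal

/-- reduction of the CLT to initial laws integrating `V`. -/
theorem stmt11 {d : ℕ} (P : Kernel (Euc d) (Euc d)) [IsMarkovKernel P]
    (V : Euc d → ℝ) (hVm : Measurable V) (hV0 : ∀ x, 0 ≤ V x)
    (U : Measure (Euc d) → ℝ) (μ : Measure (Euc d))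
    (G : Measure ℝ) (hG : IsProbabilityMeasure G)
    (hyp : ∀ ν₁ : Measure (Euc d), IsProbabilityMeasure ν₁ →
      (∫⁻ x, ENNReal.ofReal (V x) ∂ν₁) < ⊤ →
      ∀ (Ω : Type) [MeasurableSpace Ω] (Pr : Measure Ω), IsProbabilityMeasure Pr →
      ∀ X : ℕ → Ω → Euc d, IsMarkovChain Pr X ν₁ P →
        cid Pr (fun N ω => Real.sqrt N * (U (emp X N ω) - U μ)) G) :
    ∀ ν₁ : Measure (Euc d), IsProbabilityMeasure ν₁ →
      ∀ (Ω : Type) [MeasurableSpace Ω] (Pr : Measure Ω), IsProbabilityMeasure Pr →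
      ∀ X : ℕ → Ω → Euc d, IsMarkovChain Pr X ν₁ P →
        cid Pr (fun N ω => Real.sqrt N * (U (emp X N ω) - U μ)) G := by
  intro ν₁ hν₁ Ω mΩ Pr hPr X hX
  haveI := hν₁; haveI := hPr; haveI := hG
  -- Step 1: the tilted chain, with integrable initial law equivalent to `ν₁`.
  set W₁ : Euc d → ℝ≥0 := fun x => Real.toNNReal ((1 + V x)⁻¹) with hW₁def
  have hW₁m : Measurable W₁ := (measurable_const.add hVm).inv.real_toNNReal
  have hV1pos : ∀ x, (0 : ℝ) < 1 + V x := fun x => by linarith [hV0 x]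
  have hinv_le : ∀ x, (1 + V x)⁻¹ * V x ≤ 1 := by
    intro x
    have h2 : (1 + V x)⁻¹ * (1 + V x) = 1 := inv_mul_cancel₀ (hV1pos x).ne'
    nlinarith [inv_nonneg.mpr (hV1pos x).le, hV0 x]
  have hW₁le : ∀ x, W₁ x ≤ 1 := by
    intro x
    have h1 : (1 + V x)⁻¹ ≤ 1 := by
      have h2 : (1 + V x)⁻¹ * (1 + V x) = 1 := inv_mul_cancel₀ (hV1pos x).ne'
      nlinarith [inv_nonneg.mpr (hV1pos x).le, hV0 x]
    calc W₁ x = Real.toNNReal ((1 + V x)⁻¹) := rfl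
      _ ≤ Real.toNNReal 1 := Real.toNNReal_mono h1
      _ = 1 := Real.toNNReal_one
  have hW₁pos : ∀ x, ((W₁ x : ℝ≥0∞)) ≠ 0 := fun x =>
    ENNReal.coe_ne_zero.mpr (Real.toNNReal_pos.mpr (inv_pos.mpr (hV1pos x))).ne'
  have hWΩm : Measurable fun ω => ((W₁ (X 0 ω) : ℝ≥0∞)) :=
    (hW₁m.comp (hX.1 0)).coe_nnreal_ennreal
  have hZ₁0 : (∫⁻ ω, (W₁ (X 0 ω) : ℝ≥0∞) ∂Pr) ≠ 0 := by
    intro h0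
    have hae := (lintegral_eq_zero_iff hWΩm).mp h0
    have hfalse : ∀ᵐ ω ∂Pr, False := hae.mono fun ω hω => hW₁pos (X 0 ω) hω
    have hbot : Pr = 0 := ae_eq_bot.mp (Filter.eventually_false_iff_eq_bot.mp hfalse)
    have hone := measure_univ (μ := Pr)
    rw [hbot] at hone; simp at hone
  have hZ₁le : (∫⁻ ω, (W₁ (X 0 ω) : ℝ≥0∞) ∂Pr) ≤ 1 := by
    calc ∫⁻ ω, (W₁ (X 0 ω) : ℝ≥0∞) ∂Pr ≤ ∫⁻ _, 1 ∂Pr :=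
          lintegral_mono fun ω => ENNReal.coe_le_one_iff.mpr (hW₁le (X 0 ω))
      _ = 1 := by simp
  have hZ₁top : (∫⁻ ω, (W₁ (X 0 ω) : ℝ≥0∞) ∂Pr) ≠ ⊤ :=
    (hZ₁le.trans_lt ENNReal.one_lt_top).ne
  obtain ⟨hchain₁, hprob₁⟩ := my_markov_reweight hX W₁ hW₁m hW₁le hZ₁0
  haveI := hprob₁
  have hν₁'prob : IsProbabilityMeasure ((∫⁻ ω, (W₁ (X 0 ω) : ℝ≥0∞) ∂Pr)⁻¹ • ν₁.withDensity fun x => (W₁ x : ℝ≥0∞)) := by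
    have h := Measure.isProbabilityMeasure_map (μ := ((∫⁻ ω, (W₁ (X 0 ω) : ℝ≥0∞) ∂Pr)⁻¹ • Pr.withDensity fun ω => (W₁ (X 0 ω) : ℝ≥0∞))) (hX.1 0).aemeasurable
    rwa [hchain₁.2.1] at h
  have hν₁'V : (∫⁻ x, ENNReal.ofReal (V x) ∂((∫⁻ ω, (W₁ (X 0 ω) : ℝ≥0∞) ∂Pr)⁻¹ • ν₁.withDensity fun x => (W₁ x : ℝ≥0∞))) < ⊤ := by
    rw [lintegral_smul_measure,
      lintegral_withDensity_eq_lintegral_mul ν₁ hW₁m.coe_nnreal_ennreal hVm.ennreal_ofReal]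
    have hb : ∀ x, ((fun x => (W₁ x : ℝ≥0∞)) * fun x => ENNReal.ofReal (V x)) x ≤ 1 := by
      intro x
      have hcoe : ((W₁ x : ℝ≥0∞)) = ENNReal.ofReal ((1 + V x)⁻¹) := rfl
      simp only [Pi.mul_apply]
      rw [hcoe, ← ENNReal.ofReal_mul (inv_nonneg.mpr (hV1pos x).le)]
      refine le_trans (ENNReal.ofReal_le_ofReal (hinv_le x)) (by simp)
    have hle : (∫⁻ ω, (W₁ (X 0 ω) : ℝ≥0∞) ∂Pr)⁻¹
          * (∫⁻ x, ((fun x => (W₁ x : ℝ≥0∞)) * fun x => ENNReal.ofReal (V x)) x ∂ν₁)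
        ≤ (∫⁻ ω, (W₁ (X 0 ω) : ℝ≥0∞) ∂Pr)⁻¹ * 1 :=
      mul_le_mul_right (le_trans (lintegral_mono hb) (by simp)) _
    refine lt_of_le_of_lt hle ?_
    rw [mul_one]
    exact ENNReal.inv_lt_top.mpr (pos_iff_ne_zero.mpr hZ₁0)
  have hcid₁ := hyp ((∫⁻ ω, (W₁ (X 0 ω) : ℝ≥0∞) ∂Pr)⁻¹ • ν₁.withDensity fun x => (W₁ x : ℝ≥0∞)) hν₁'prob hν₁'V Ω ((∫⁻ ω, (W₁ (X 0 ω) : ℝ≥0∞) ∂Pr)⁻¹ • Pr.withDensity fun ω => (W₁ (X 0 ω) : ℝ≥0∞)) hprob₁ X hchain₁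
  have hAE := my_eventually_aemeasurable hcid₁
  have hacPr : Pr ≪ ((∫⁻ ω, (W₁ (X 0 ω) : ℝ≥0∞) ∂Pr)⁻¹ • Pr.withDensity fun ω => (W₁ (X 0 ω) : ℝ≥0∞)) := my_ac_reweight Pr hWΩm (fun ω => hW₁pos (X 0 ω)) hZ₁top
  have hAEPr : ∀ᶠ N : ℕ in atTop,
      AEMeasurable (fun ω => Real.sqrt (N : ℝ) * (U (emp X N ω) - U μ)) Pr :=
    hAE.mono fun N h => h.mono_ac hacPr
  -- Step 2: the limit statement.
  intro f
  refine Metric.tendsto_atTop.mpr fun ε hε => ?_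
  set C : ℝ := ‖f‖ with hCdef
  have hC0 : 0 ≤ C := norm_nonneg f
  have hδpos : (0 : ℝ) < ε / (4 * (C + 1)) := by positivity
  -- choose the truncation level K
  set sK : ℕ → Set Ω := fun K => {ω | (K : ℝ) < V (X 0 ω)} with hsKdef
  have hsm : ∀ K, MeasurableSet (sK K) := fun K =>
    measurableSet_lt measurable_const (hVm.comp (hX.1 0))
  have hmono : Antitone sK := fun K K' h ω hω => by
    have hω' : (K' : ℝ) < V (X 0 ω) := hω
    show (K : ℝ) < V (X 0 ω)
    exact lt_of_le_of_lt (Nat.cast_le.mpr h) hω'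
  have hiInter : ⋂ K, sK K = ∅ := by
    ext ω
    simp only [Set.mem_iInter, Set.mem_empty_iff_false, iff_false, hsKdef, Set.mem_setOf_eq]
    intro h
    obtain ⟨K, hK⟩ := exists_nat_gt (V (X 0 ω))
    exact absurd (h K) (not_lt.mpr hK.le)
  have htend : Tendsto (fun K => Pr (sK K)) atTop (𝓝 0) := by
    have h := tendsto_measure_iInter_atTop (μ := Pr)
      (fun K => (hsm K).nullMeasurableSet) hmono ⟨0, measure_ne_top _ _⟩
    rw [hiInter] at h
    simp only [measure_empty] at h; exact h
  have hminpos : (0 : ℝ≥0∞) < min (1/2) (ENNReal.ofReal (ε / (4 * (C + 1)))) :=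
    lt_min (by norm_num) (ENNReal.ofReal_pos.mpr hδpos)
  obtain ⟨K, hK⟩ := (htend.eventually_lt_const hminpos).exists
  set S : Set (Euc d) := {x | V x ≤ (K : ℝ)} with hSdef
  have hSm : MeasurableSet S := measurableSet_le hVm measurable_const
  set B : Set Ω := X 0 ⁻¹' S with hBdef
  have hB : MeasurableSet B := hX.1 0 hSm
  have hBc : Bᶜ = sK K := by
    ext ω; simp [hBdef, hSdef, hsKdef, Set.mem_preimage, not_le]
  have hPrBc : Pr Bᶜ < min (1/2) (ENNReal.ofReal (ε / (4 * (C + 1)))) := by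
    rw [hBc]; exact hK
  have hPrB0 : Pr B ≠ 0 := by
    intro h0
    have h1 : (1 : ℝ≥0∞) = Pr Bᶜ := by
      rw [← measure_univ (μ := Pr), ← measure_add_measure_compl hB, h0, zero_add]
    have h2 : Pr Bᶜ < 1 :=
      lt_of_lt_of_le hPrBc (le_trans (min_le_left _ _) (by norm_num))
    rw [← h1] at h2; exact lt_irrefl _ h2
  -- the conditioned chain
  set W₂ : Euc d → ℝ≥0 := S.indicator fun _ => 1 with hW₂def
  have hW₂m : Measurable W₂ := measurable_const.indicator hSm
  have hW₂le : ∀ x, W₂ x ≤ 1 := fun x => by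
    by_cases h : x ∈ S <;>
      simp [hW₂def, Set.indicator_of_mem, Set.indicator_of_notMem, h]
  have hfun : (fun ω => ((W₂ (X 0 ω) : ℝ≥0∞))) = B.indicator (1 : Ω → ℝ≥0∞) := by
    funext ω
    by_cases h : X 0 ω ∈ S <;>
      simp [hW₂def, hBdef, Set.indicator_of_mem, Set.indicator_of_notMem, h, Set.mem_preimage]
  have hZ₂eq : (∫⁻ ω, (W₂ (X 0 ω) : ℝ≥0∞) ∂Pr) = Pr B := by
    rw [hfun, lintegral_indicator_one hB]
  have hZ₂0 : (∫⁻ ω, (W₂ (X 0 ω) : ℝ≥0∞) ∂Pr) ≠ 0 := by rw [hZ₂eq]; exact hPrB0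
  obtain ⟨hchain₂, hprob₂⟩ := my_markov_reweight hX W₂ hW₂m hW₂le hZ₂0
  haveI := hprob₂
  have hν₂prob : IsProbabilityMeasure ((∫⁻ ω, (W₂ (X 0 ω) : ℝ≥0∞) ∂Pr)⁻¹ • ν₁.withDensity fun x => (W₂ x : ℝ≥0∞)) := by
    have h := Measure.isProbabilityMeasure_map (μ := ((∫⁻ ω, (W₂ (X 0 ω) : ℝ≥0∞) ∂Pr)⁻¹ • Pr.withDensity fun ω => (W₂ (X 0 ω) : ℝ≥0∞))) (hX.1 0).aemeasurable
    rwa [hchain₂.2.1] at h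
  have hν₂V : (∫⁻ x, ENNReal.ofReal (V x) ∂((∫⁻ ω, (W₂ (X 0 ω) : ℝ≥0∞) ∂Pr)⁻¹ • ν₁.withDensity fun x => (W₂ x : ℝ≥0∞))) < ⊤ := by
    rw [lintegral_smul_measure,
      lintegral_withDensity_eq_lintegral_mul ν₁ hW₂m.coe_nnreal_ennreal hVm.ennreal_ofReal]
    have hb : ∀ x, ((fun x => (W₂ x : ℝ≥0∞)) * fun x => ENNReal.ofReal (V x)) x
        ≤ ENNReal.ofReal K := by
      intro x
      simp only [Pi.mul_apply]
      by_cases h : x ∈ S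
      · have h1 : W₂ x = 1 := by rw [hW₂def]; exact Set.indicator_of_mem h _
        rw [h1]
        simpa using ENNReal.ofReal_le_ofReal (show V x ≤ (K : ℝ) from h)
      · have h1 : W₂ x = 0 := by rw [hW₂def]; exact Set.indicator_of_notMem h _
        rw [h1]; simp
    have hle : (∫⁻ ω, (W₂ (X 0 ω) : ℝ≥0∞) ∂Pr)⁻¹
          * (∫⁻ x, ((fun x => (W₂ x : ℝ≥0∞)) * fun x => ENNReal.ofReal (V x)) x ∂ν₁)
        ≤ (∫⁻ ω, (W₂ (X 0 ω) : ℝ≥0∞) ∂Pr)⁻¹ * ENNReal.ofReal K :=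
      mul_le_mul_right (le_trans (lintegral_mono hb) (by simp)) _
    refine lt_of_le_of_lt hle ?_
    exact ENNReal.mul_lt_top (ENNReal.inv_lt_top.mpr (pos_iff_ne_zero.mpr hZ₂0))
      ENNReal.ofReal_lt_top
  have hcid₂ := hyp ((∫⁻ ω, (W₂ (X 0 ω) : ℝ≥0∞) ∂Pr)⁻¹ • ν₁.withDensity fun x => (W₂ x : ℝ≥0∞)) hν₂prob hν₂V Ω ((∫⁻ ω, (W₂ (X 0 ω) : ℝ≥0∞) ∂Pr)⁻¹ • Pr.withDensity fun ω => (W₂ (X 0 ω) : ℝ≥0∞)) hprob₂ X hchain₂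
  have hPr₂eq : ((∫⁻ ω, (W₂ (X 0 ω) : ℝ≥0∞) ∂Pr)⁻¹ • Pr.withDensity fun ω => (W₂ (X 0 ω) : ℝ≥0∞)) = (Pr B)⁻¹ • Pr.restrict B := by
    rw [hZ₂eq, hfun, withDensity_indicator_one hB]
  -- assembling the estimate
  obtain ⟨N₁, hN₁⟩ := Metric.tendsto_atTop.mp (hcid₂ f) (ε / 2) (by positivity)
  obtain ⟨N₂, hN₂⟩ := Filter.eventually_atTop.mp hAEPr
  refine ⟨max N₁ N₂, fun N hN => ?_⟩
  have hae : AEMeasurable (fun ω => Real.sqrt (N : ℝ) * (U (emp X N ω) - U μ)) Pr :=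
    hN₂ N (le_trans (le_max_right _ _) hN)
  have hcl := hN₁ N (le_trans (le_max_left _ _) hN)
  set gN : Ω → ℝ := fun ω => f (Real.sqrt (N : ℝ) * (U (emp X N ω) - U μ)) with hgNdef
  have hgN_aesm : AEStronglyMeasurable gN Pr :=
    (f.continuous.measurable.comp_aemeasurable hae).aestronglyMeasurable
  have hgNC : ∀ ω, |gN ω| ≤ C := fun ω => by
    rw [hgNdef, ← Real.norm_eq_abs]; exact f.norm_coe_le_norm _
  have hbound := my_integral_cond_bound Pr hB hPrB0 hgN_aesm hC0 hgNC
  rw [← hPr₂eq] at hbound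
  have htR : (Pr Bᶜ).toReal < ε / (4 * (C + 1)) :=
    ENNReal.toReal_lt_of_lt_ofReal (lt_of_lt_of_le hPrBc (min_le_right _ _))
  have htR0 : 0 ≤ (Pr Bᶜ).toReal := ENNReal.toReal_nonneg
  have hhalf : 2 * C * (Pr Bᶜ).toReal ≤ ε / 2 := by
    have h4 : (0:ℝ) < 4 * (C + 1) := by linarith
    have h5 : (Pr Bᶜ).toReal * (4 * (C + 1)) < ε := (lt_div_iff₀ h4).mp htR
    nlinarith [h5, mul_nonneg hC0 htR0, htR0]
  have hdist2 : |(∫ ω, gN ω ∂((∫⁻ ω, (W₂ (X 0 ω) : ℝ≥0∞) ∂Pr)⁻¹ • Pr.withDensity fun ω => (W₂ (X 0 ω) : ℝ≥0∞))) - ∫ x, f x ∂G| < ε / 2 := by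
    have h2 := hcl; rw [Real.dist_eq] at h2; exact h2
  have final : |(∫ ω, gN ω ∂Pr) - ∫ x, f x ∂G| < ε := by
    calc |(∫ ω, gN ω ∂Pr) - ∫ x, f x ∂G|
        ≤ |(∫ ω, gN ω ∂((∫⁻ ω, (W₂ (X 0 ω) : ℝ≥0∞) ∂Pr)⁻¹ • Pr.withDensity fun ω => (W₂ (X 0 ω) : ℝ≥0∞))) - ∫ x, f x ∂G|
          + |(∫ ω, gN ω ∂Pr) - ∫ ω, gN ω ∂((∫⁻ ω, (W₂ (X 0 ω) : ℝ≥0∞) ∂Pr)⁻¹ • Pr.withDensity fun ω => (W₂ (X 0 ω) : ℝ≥0∞))| := by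
            have := abs_sub_le (∫ ω, gN ω ∂Pr) (∫ ω, gN ω ∂((∫⁻ ω, (W₂ (X 0 ω) : ℝ≥0∞) ∂Pr)⁻¹ • Pr.withDensity fun ω => (W₂ (X 0 ω) : ℝ≥0∞))) (∫ x, f x ∂G)
            linarith [this]
      _ < ε := by nlinarith [hbound, hdist2]
  show dist (∫ ω, gN ω ∂Pr) (∫ x, f x ∂G) < ε
  rw [Real.dist_eq]
  exact final
end
end

section
/- Let ℓ ≥ 0 and let (X_i)_{i≥1} be ℝ^d-valued random variables satisfying condition TX. Then the following Lindeberg-type condition holds: for every ε > 0, lim_{N→∞} (1/N) Σ_{i=1}^N E(|X_i|^ℓ · 1_{{|X_i|^ℓ > Nε}}) = 0. -/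
open MeasureTheory ProbabilityTheory Filter ENNReal Topology

noncomputable section

open Paper


/-- Kronecker-type lemma in `ℝ≥0∞`: if `∑ A i < ∞` then `(1/N) ∑_{i<N} (i+1) A i → 0`. -/
lemma kronecker_ennreal (A : ℕ → ℝ≥0∞) (h : ∑' i, A i ≠ ⊤) :
    Tendsto (fun N : ℕ => (N : ℝ≥0∞)⁻¹ * ∑ i ∈ Finset.range N, ((i : ℝ≥0∞) + 1) * A i)
      atTop (𝓝 0) := by
  rw [ENNReal.tendsto_nhds_zero]
  intro δ hδ
  have hδ2 : 0 < δ / 2 := ENNReal.half_pos hδ.ne'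
  obtain ⟨M, hM⟩ : ∃ M, ∑' k, A (k + M) ≤ δ / 2 :=
    ((ENNReal.tendsto_nhds_zero.mp (ENNReal.tendsto_sum_nat_add A h)) (δ / 2) hδ2).exists
  set C := ∑ i ∈ Finset.range M, ((i : ℝ≥0∞) + 1) * A i with hCdef
  have hC : C ≠ ⊤ := by
    refine (ENNReal.sum_lt_top.2 fun i _ => ?_).ne
    exact ENNReal.mul_lt_top (by simp [ENNReal.add_lt_top]) ((ENNReal.le_tsum i).trans_lt h.lt_top)
  have h1 : Tendsto (fun N : ℕ => (N : ℝ≥0∞)⁻¹ * C) atTop (𝓝 0) := by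
    simpa using ENNReal.Tendsto.mul_const ENNReal.tendsto_inv_nat_nhds_zero (Or.inr hC)
  have h2 : ∀ᶠ N : ℕ in atTop, (N : ℝ≥0∞)⁻¹ * C ≤ δ / 2 :=
    ENNReal.tendsto_nhds_zero.mp h1 (δ / 2) hδ2
  filter_upwards [h2, eventually_ge_atTop M, eventually_ge_atTop 1] with N hN2 hNM hN1
  have hNne : (N : ℝ≥0∞) ≠ 0 := Nat.cast_ne_zero.mpr (by omega)
  have hsplit : ∑ i ∈ Finset.range N, ((i : ℝ≥0∞) + 1) * A i
      = C + ∑ i ∈ Finset.Ico M N, ((i : ℝ≥0∞) + 1) * A i := by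
    rw [hCdef, Finset.range_eq_Ico, Finset.range_eq_Ico]
    exact (Finset.sum_Ico_consecutive (fun i => ((i : ℝ≥0∞) + 1) * A i) (Nat.zero_le M) hNM).symm
  have hterm : ∀ i ∈ Finset.Ico M N,
      (N : ℝ≥0∞)⁻¹ * (((i : ℝ≥0∞) + 1) * A i) ≤ A i := by
    intro i hi
    have hiN : (i : ℝ≥0∞) + 1 ≤ (N : ℝ≥0∞) := by
      have : (i : ℕ) + 1 ≤ N := (Finset.mem_Ico.mp hi).2
      exact_mod_cast this
    calc (N : ℝ≥0∞)⁻¹ * (((i : ℝ≥0∞) + 1) * A i)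
        = ((N : ℝ≥0∞)⁻¹ * ((i : ℝ≥0∞) + 1)) * A i := by ring
      _ ≤ ((N : ℝ≥0∞)⁻¹ * (N : ℝ≥0∞)) * A i := by
          gcongr
      _ = A i := by rw [ENNReal.inv_mul_cancel hNne (ENNReal.natCast_ne_top N), one_mul]
  have htail : ∑ i ∈ Finset.Ico M N, A i ≤ δ / 2 := by
    rw [Finset.sum_Ico_eq_sum_range]
    refine le_trans (ENNReal.sum_le_tsum _) ?_
    simpa [add_comm] using hM
  calc (N : ℝ≥0∞)⁻¹ * ∑ i ∈ Finset.range N, ((i : ℝ≥0∞) + 1) * A i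
      = (N : ℝ≥0∞)⁻¹ * C + ∑ i ∈ Finset.Ico M N, (N : ℝ≥0∞)⁻¹ * (((i : ℝ≥0∞) + 1) * A i) := by
        rw [hsplit, mul_add]
        congr 1
        exact Finset.mul_sum _ _ _
    _ ≤ δ / 2 + ∑ i ∈ Finset.Ico M N, A i := by
        exact add_le_add hN2 (Finset.sum_le_sum hterm)
    _ ≤ δ / 2 + δ / 2 := add_le_add le_rfl htail
    _ = δ := ENNReal.add_halves δ

/-- TX implies the Lindeberg-type condition. -/
theorem stmt13 {d : ℕ} (ℓ : ℝ) (hℓ : 0 ≤ ℓ)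
    {Ω : Type*} [MeasurableSpace Ω] (Pr : Measure Ω) [IsProbabilityMeasure Pr]
    (X : ℕ → Ω → Euc d) (hX : ∀ i, Measurable (X i))
    (hTX : TX Pr X ℓ) :
    ∀ ε > (0:ℝ), Tendsto (fun N : ℕ => (N : ℝ≥0∞)⁻¹ * ∑ i ∈ Finset.range N,
      ∫⁻ ω in {ω | (N : ℝ) * ε < ‖X i ω‖ ^ ℓ}, ENNReal.ofReal (‖X i ω‖ ^ ℓ) ∂Pr)
      atTop (𝓝 0) := by
  obtain ⟨β, hβ, hsum⟩ := hTX
  intro ε hε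
  set S : ℕ → ℝ≥0∞ := fun i =>
    ∫⁻ ω in {ω | ((i : ℝ) + 1) ^ β < ‖X i ω‖ ^ ℓ},
      ENNReal.ofReal (‖X i ω‖ ^ ℓ - ((i : ℝ) + 1) ^ β) ∂Pr with hSdef
  set A : ℕ → ℝ≥0∞ := fun i => ((i : ℝ≥0∞) + 1)⁻¹ * S i with hAdef
  have hAsum : ∑' i, A i ≠ ⊤ := hsum.ne
  have hSA : ∀ i, S i = ((i : ℝ≥0∞) + 1) * A i := by
    intro i
    have hne : ((i : ℝ≥0∞) + 1) ≠ 0 := by simp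
    have hnt : ((i : ℝ≥0∞) + 1) ≠ ⊤ := by
      simp [ENNReal.add_ne_top]
    rw [hAdef, ← mul_assoc, ENNReal.mul_inv_cancel hne hnt, one_mul]
  have hkron := kronecker_ennreal A hAsum
  rw [ENNReal.tendsto_nhds_zero]
  intro δ hδ
  have hδ2 : 0 < δ / 2 := ENNReal.half_pos hδ.ne'
  have h2 : ∀ᶠ N : ℕ in atTop,
      (N : ℝ≥0∞)⁻¹ * ∑ i ∈ Finset.range N, ((i : ℝ≥0∞) + 1) * A i ≤ δ / 2 :=
    ENNReal.tendsto_nhds_zero.mp hkron (δ / 2) hδ2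
  -- eventually `(N:ℝ)^(1-β) * ε ≥ 2`
  have htend : Tendsto (fun N : ℕ => (N : ℝ) ^ (1 - β) * ε) atTop atTop :=
    ((tendsto_rpow_atTop (by linarith [hβ.2] : (0:ℝ) < 1 - β)).comp
      tendsto_natCast_atTop_atTop).atTop_mul_const hε
  have h3 : ∀ᶠ N : ℕ in atTop, (2 : ℝ) ≤ (N : ℝ) ^ (1 - β) * ε := htend.eventually_ge_atTop 2
  filter_upwards [h2, h3, eventually_ge_atTop 1] with N hN2 hN3 hN1
  have hNpos : (0 : ℝ) < N := by exact_mod_cast hN1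
  have hNβ : 2 * (N : ℝ) ^ β ≤ (N : ℝ) * ε := by
    have hβpos : (0 : ℝ) < (N : ℝ) ^ β := Real.rpow_pos_of_pos hNpos β
    calc 2 * (N : ℝ) ^ β ≤ (N : ℝ) ^ β * ((N : ℝ) ^ (1 - β) * ε) := by nlinarith
      _ = (N : ℝ) * ε := by
          rw [← mul_assoc, ← Real.rpow_add hNpos]
          norm_num
  -- pointwise bound for each `i < N`
  have hbound : ∀ i ∈ Finset.range N,
      (∫⁻ ω in {ω | (N : ℝ) * ε < ‖X i ω‖ ^ ℓ}, ENNReal.ofReal (‖X i ω‖ ^ ℓ) ∂Pr)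
        ≤ 2 * S i := by
    intro i hi
    have hiN : ((i : ℝ) + 1) ≤ (N : ℝ) := by
      have : i + 1 ≤ N := Finset.mem_range.mp hi
      exact_mod_cast this
    have hc : ((i : ℝ) + 1) ^ β ≤ (N : ℝ) ^ β :=
      Real.rpow_le_rpow (by positivity) hiN hβ.1.le
    have hcN : 2 * ((i : ℝ) + 1) ^ β ≤ (N : ℝ) * ε := by linarith
    have hNεpos : 0 < (N : ℝ) * ε := by positivity
    have hsub : {ω | (N : ℝ) * ε < ‖X i ω‖ ^ ℓ}
        ⊆ {ω | ((i : ℝ) + 1) ^ β < ‖X i ω‖ ^ ℓ} := by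
      intro ω hω
      simp only [Set.mem_setOf_eq] at hω ⊢
      nlinarith [Real.rpow_pos_of_pos (by positivity : (0:ℝ) < (i : ℝ) + 1) β]
    have hg : Measurable fun ω =>
        ENNReal.ofReal (2 * (‖X i ω‖ ^ ℓ - ((i : ℝ) + 1) ^ β)) := by
      apply Measurable.ennreal_ofReal
      exact (((hX i).norm.pow_const ℓ).sub measurable_const).const_mul 2
    calc (∫⁻ ω in {ω | (N : ℝ) * ε < ‖X i ω‖ ^ ℓ}, ENNReal.ofReal (‖X i ω‖ ^ ℓ) ∂Pr)
        ≤ ∫⁻ ω in {ω | (N : ℝ) * ε < ‖X i ω‖ ^ ℓ},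
            ENNReal.ofReal (2 * (‖X i ω‖ ^ ℓ - ((i : ℝ) + 1) ^ β)) ∂Pr := by
          refine setLIntegral_mono hg fun ω hω => ?_
          simp only [Set.mem_setOf_eq] at hω
          apply ENNReal.ofReal_le_ofReal
          linarith
      _ = 2 * ∫⁻ ω in {ω | (N : ℝ) * ε < ‖X i ω‖ ^ ℓ},
            ENNReal.ofReal (‖X i ω‖ ^ ℓ - ((i : ℝ) + 1) ^ β) ∂Pr := by
          rw [← lintegral_const_mul' 2 _ ENNReal.ofNat_ne_top]
          congr 1
          ext ω
          rw [ENNReal.ofReal_mul (by norm_num : (0:ℝ) ≤ 2)]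
          norm_num
      _ ≤ 2 * S i := by
          gcongr
          exact lintegral_mono_set hsub
  calc (N : ℝ≥0∞)⁻¹ * ∑ i ∈ Finset.range N,
        ∫⁻ ω in {ω | (N : ℝ) * ε < ‖X i ω‖ ^ ℓ}, ENNReal.ofReal (‖X i ω‖ ^ ℓ) ∂Pr
      ≤ (N : ℝ≥0∞)⁻¹ * ∑ i ∈ Finset.range N, 2 * S i := by
        gcongr with i hi
        exact hbound i hi
    _ = 2 * ((N : ℝ≥0∞)⁻¹ * ∑ i ∈ Finset.range N, ((i : ℝ≥0∞) + 1) * A i) := by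
        simp only [hSA]
        rw [← Finset.mul_sum]
        ring
    _ ≤ 2 * (δ / 2) := by gcongr
    _ = δ := by
        rw [mul_comm]
        exact ENNReal.div_mul_cancel (by norm_num) ENNReal.ofNat_ne_top
end
end

section
/- Let ℓ > 0, n ∈ ℕ with n ≥ 2, and let φ : (ℝ^d)^n → ℝ be a symmetric continuous function with lim_{|x₁|→∞} sup_{(x₂,…,x_n)∈(ℝ^d)^{n−1}} |φ(x₁,x₂,…,x_n)| / ∏_{i=1}^n (1+|x_i|^{ℓ/2}) = 0. For μ̃ ∈ 𝒫_ℓ(ℝ^d) define δU/δm(μ̃,x₁) = n ∫_{(ℝ^d)^{n−1}} (φ(x₁,x₂,…,x_n) − φ(0,x₂,…,x_n)) μ̃(dx₂)⋯μ̃(dx_n). Then for every μ ∈ 𝒫_ℓ(ℝ^d) and every r > 0 there exists a finite constant D such that for all (μ̃, x₁) ∈ B(μ,r) × ℝ^d, |δU/δm(μ̃,x₁)| ≤ D(1+|x₁|^{ℓ/2}), where B(μ,r) is the W_ℓ-ball of radius r centered at μ. -/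
open MeasureTheory ProbabilityTheory Filter ENNReal Topology

noncomputable section

open Paper


/-- The linear functional derivative of the U-statistic functional associated to `φ`:
`δU/δm(m, x₁) = n ∫ (φ(x₁, rest) - φ(0, rest)) m^{⊗(n-1)}(drest)` with `n = k+1`. -/
def USderiv {d : ℕ} (k : ℕ) (φ : (Fin (k + 1) → Euc d) → ℝ) (m : Measure (Euc d))
    (x₁ : Euc d) : ℝ :=
  ((k : ℝ) + 1) *
    ∫ rest : Fin k → Euc d, (φ (Fin.cons x₁ rest) - φ (Fin.cons 0 rest))
      ∂(Measure.pi fun _ => m)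


section Aux

/-- `(a+b)^ℓ ≤ 2^ℓ (a^ℓ + b^ℓ)` for nonneg reals. -/
lemma add_rpow_le (ℓ : ℝ) (hℓ : 0 ≤ ℓ) {a b : ℝ} (ha : 0 ≤ a) (hb : 0 ≤ b) :
    (a + b) ^ ℓ ≤ 2 ^ ℓ * (a ^ ℓ + b ^ ℓ) := by
  have h1 : a + b ≤ 2 * max a b := by
    rcases le_total a b with h | h
    · simp [max_eq_right h]; linarith
    · simp [max_eq_left h]; linarith
  have h2 : (a + b) ^ ℓ ≤ (2 * max a b) ^ ℓ :=
    Real.rpow_le_rpow (by positivity) h1 hℓ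
  have h3 : (2 * max a b) ^ ℓ = 2 ^ ℓ * (max a b) ^ ℓ :=
    Real.mul_rpow (by norm_num) (le_max_of_le_left ha)
  have h4 : (max a b : ℝ) ^ ℓ ≤ a ^ ℓ + b ^ ℓ := by
    rcases le_total a b with h | h
    · rw [max_eq_right h]; nlinarith [Real.rpow_nonneg ha ℓ]
    · rw [max_eq_left h]; nlinarith [Real.rpow_nonneg hb ℓ]
  calc (a + b) ^ ℓ ≤ 2 ^ ℓ * (max a b) ^ ℓ := by rw [← h3]; exact h2
    _ ≤ 2 ^ ℓ * (a ^ ℓ + b ^ ℓ) := by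
        have h5 : (0:ℝ) ≤ 2 ^ ℓ := Real.rpow_nonneg (by norm_num) ℓ
        nlinarith

/-- Uniform moment bound on a Wasserstein ball. -/
lemma moment_bound {d : ℕ} (ℓ : ℝ) (hℓ : 0 < ℓ) (μ m : Measure (Euc d)) (r : ℝ)
    (hm : m ∈ ball ℓ μ r) :
    ∫⁻ x, ENNReal.ofReal (‖x‖ ^ ℓ) ∂m ≤
      ENNReal.ofReal (2 ^ ℓ) *
        ((∫⁻ x, ENNReal.ofReal (‖x‖ ^ ℓ) ∂μ) + ENNReal.ofReal r ^ max ℓ 1) := by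
  obtain ⟨hmem, hW⟩ := hm
  simp only [Wl, if_neg hℓ.ne'] at hW
  simp only [iInf_lt_iff] at hW
  obtain ⟨ρ, hρ, hW⟩ := hW
  obtain ⟨hρP, hfst, hsnd⟩ := hρ
  have hc : (0:ℝ) < max ℓ 1 := lt_max_of_lt_right one_pos
  have hInt : ∫⁻ p, ENNReal.ofReal (dist p.1 p.2 ^ ℓ) ∂ρ < ENNReal.ofReal r ^ max ℓ 1 := by
    have h := ENNReal.rpow_lt_rpow hW hc
    rwa [one_div, ENNReal.rpow_inv_rpow hc.ne'] at h
  have mf : Measurable fun x : Euc d => ENNReal.ofReal (‖x‖ ^ ℓ) :=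
    (ENNReal.continuous_ofReal.comp
      (continuous_norm.rpow_const fun _ => Or.inr hℓ.le)).measurable
  have hdistm : Measurable fun p : Euc d × Euc d => ENNReal.ofReal (dist p.1 p.2 ^ ℓ) :=
    (ENNReal.continuous_ofReal.comp
      (continuous_dist.rpow_const fun _ => Or.inr hℓ.le)).measurable
  have hsndm : Measurable fun p : Euc d × Euc d => ENNReal.ofReal (‖p.2‖ ^ ℓ) :=
    mf.comp measurable_snd
  calc ∫⁻ x, ENNReal.ofReal (‖x‖ ^ ℓ) ∂m
      = ∫⁻ p, ENNReal.ofReal (‖p.1‖ ^ ℓ) ∂ρ := by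
        rw [← hfst, lintegral_map mf measurable_fst]
    _ ≤ ∫⁻ p, ENNReal.ofReal (2 ^ ℓ) *
          (ENNReal.ofReal (‖p.2‖ ^ ℓ) + ENNReal.ofReal (dist p.1 p.2 ^ ℓ)) ∂ρ := by
        apply lintegral_mono
        intro p
        have h1 : ‖p.1‖ ≤ ‖p.2‖ + dist p.1 p.2 := by
          rw [dist_eq_norm]
          have h := norm_add_le p.2 (p.1 - p.2)
          simpa using h
        have h2 : ‖p.1‖ ^ ℓ ≤ (‖p.2‖ + dist p.1 p.2) ^ ℓ :=
          Real.rpow_le_rpow (norm_nonneg _) h1 hℓ.le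
        have h3 := add_rpow_le ℓ hℓ.le (norm_nonneg p.2) (dist_nonneg (x := p.1) (y := p.2))
        calc ENNReal.ofReal (‖p.1‖ ^ ℓ)
            ≤ ENNReal.ofReal (2 ^ ℓ * (‖p.2‖ ^ ℓ + dist p.1 p.2 ^ ℓ)) :=
              ENNReal.ofReal_le_ofReal (h2.trans h3)
          _ = _ := by
              rw [ENNReal.ofReal_mul (by positivity),
                ENNReal.ofReal_add (by positivity) (by positivity)]
    _ = ENNReal.ofReal (2 ^ ℓ) *
          ((∫⁻ p, ENNReal.ofReal (‖p.2‖ ^ ℓ) ∂ρ) +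
            ∫⁻ p, ENNReal.ofReal (dist p.1 p.2 ^ ℓ) ∂ρ) := by
        rw [lintegral_const_mul' _ _ ENNReal.ofReal_ne_top, lintegral_add_left hsndm]
    _ ≤ _ := by
        have e : ∫⁻ p, ENNReal.ofReal (‖p.2‖ ^ ℓ) ∂ρ = ∫⁻ x, ENNReal.ofReal (‖x‖ ^ ℓ) ∂μ := by
          rw [← hsnd, lintegral_map mf measurable_snd]
        rw [e]
        exact mul_le_mul_of_nonneg_left (add_le_add le_rfl hInt.le) (zero_le)

/-- Global growth bound for `φ` from the symmetric limit condition. -/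
lemma phi_growth {d : ℕ} (ℓ : ℝ) (hℓ : 0 < ℓ) (k : ℕ)
    (φ : (Fin (k + 1) → Euc d) → ℝ) (hφc : Continuous φ)
    (hsym : ∀ (e : Equiv.Perm (Fin (k + 1))) (x : Fin (k + 1) → Euc d), φ (x ∘ e) = φ x)
    (hlim : ∀ ε > (0:ℝ), ∃ M : ℝ, ∀ x : Fin (k + 1) → Euc d, M ≤ ‖x 0‖ →
      |φ x| ≤ ε * ∏ i, (1 + ‖x i‖ ^ (ℓ / 2))) :
    ∃ C : ℝ, 1 ≤ C ∧ ∀ x, |φ x| ≤ C * ∏ i, (1 + ‖x i‖ ^ (ℓ / 2)) := by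
  obtain ⟨M, hM⟩ := hlim 1 one_pos
  obtain ⟨C₀, hC₀⟩ :=
    (isCompact_univ_pi fun _ : Fin (k+1) =>
      isCompact_closedBall (0 : Euc d) M).exists_bound_of_continuousOn hφc.continuousOn
  refine ⟨max C₀ 1, le_max_right _ _, fun x => ?_⟩
  have hprod1 : (1:ℝ) ≤ ∏ i, (1 + ‖x i‖ ^ (ℓ/2)) := by
    have h := Finset.prod_le_prod (s := Finset.univ) (f := fun _ : Fin (k+1) => (1:ℝ))
      (g := fun i => 1 + ‖x i‖ ^ (ℓ/2)) (fun i _ => zero_le_one)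
      (fun i _ => le_add_of_nonneg_right (Real.rpow_nonneg (norm_nonneg _) _))
    simpa using h
  by_cases h : ∃ i, M ≤ ‖x i‖
  · obtain ⟨i, hi⟩ := h
    set e := Equiv.swap (0 : Fin (k+1)) i with he_def
    have h0 : M ≤ ‖(x ∘ e) 0‖ := by
      simpa [he_def, Equiv.swap_apply_left] using hi
    have hb := hM (x ∘ e) h0
    have he : ∏ j, (1 + ‖(x ∘ e) j‖ ^ (ℓ/2)) = ∏ j, (1 + ‖x j‖ ^ (ℓ/2)) :=
      Equiv.prod_comp e (fun j => 1 + ‖x j‖ ^ (ℓ/2))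
    rw [hsym e x, he, one_mul] at hb
    exact hb.trans (le_mul_of_one_le_left (by linarith) (le_max_right _ _))
  · push_neg at h
    have hx : x ∈ Set.univ.pi fun _ : Fin (k+1) => Metric.closedBall (0:Euc d) M := by
      intro i _
      exact mem_closedBall_zero_iff.2 (h i).le
    have hb : |φ x| ≤ C₀ := by
      have := hC₀ x hx
      rwa [Real.norm_eq_abs] at this
    calc |φ x| ≤ max C₀ 1 := hb.trans (le_max_left _ _)
      _ ≤ max C₀ 1 * ∏ i, (1 + ‖x i‖ ^ (ℓ/2)) :=
          le_mul_of_one_le_right (le_trans zero_le_one (le_max_right _ _)) hprod1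

end Aux

/-- RU2 for the U-statistic functional. -/
theorem stmt16 {d : ℕ} (ℓ : ℝ) (hℓ : 0 < ℓ) (k : ℕ) (hk : 1 ≤ k)
    (φ : (Fin (k + 1) → Euc d) → ℝ) (hφc : Continuous φ)
    (hsym : ∀ (e : Equiv.Perm (Fin (k + 1))) (x : Fin (k + 1) → Euc d), φ (x ∘ e) = φ x)
    (hlim : ∀ ε > (0:ℝ), ∃ M : ℝ, ∀ x : Fin (k + 1) → Euc d, M ≤ ‖x 0‖ →
      |φ x| ≤ ε * ∏ i, (1 + ‖x i‖ ^ (ℓ / 2)))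
    (μ : Measure (Euc d)) (hμ : MemP ℓ μ) (r : ℝ) (hr : 0 < r) :
    ∃ D : ℝ, ∀ m ∈ ball ℓ μ r, ∀ x₁ : Euc d,
      |USderiv k φ m x₁| ≤ D * (1 + ‖x₁‖ ^ (ℓ / 2)) := by
  obtain ⟨C, hC1, hCb⟩ := phi_growth ℓ hℓ k φ hφc hsym hlim
  have hC0 : (0:ℝ) ≤ C := le_trans zero_le_one hC1
  have hgc : Continuous fun y : Euc d => 1 + ‖y‖ ^ (ℓ/2) :=
    continuous_const.add (continuous_norm.rpow_const fun _ => Or.inr (by positivity))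
  set B : ℝ≥0∞ := ENNReal.ofReal (2 ^ ℓ) *
      ((∫⁻ x, ENNReal.ofReal (‖x‖ ^ ℓ) ∂μ) + ENNReal.ofReal r ^ max ℓ 1) with hBdef
  have hBfin : B ≠ ⊤ := by
    apply ENNReal.mul_ne_top ENNReal.ofReal_ne_top
    exact ENNReal.add_ne_top.2 ⟨hμ.2.ne,
      (ENNReal.rpow_lt_top_of_nonneg (le_max_of_le_right zero_le_one)
        ENNReal.ofReal_ne_top).ne⟩
  set A : ℝ := 2 + B.toReal with hAdef
  have hA1 : (1:ℝ) ≤ A := by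
    have := ENNReal.toReal_nonneg (a := B); simp only [hAdef]; linarith
  have hA0 : (0:ℝ) ≤ A := by linarith
  refine ⟨2 * ((k:ℝ)+1) * C * A ^ k, fun m hm x₁ => ?_⟩
  haveI hmP : IsProbabilityMeasure m := hm.1.1
  have hmom := moment_bound ℓ hℓ μ m r hm
  have hmommeas : Measurable fun y : Euc d => ‖y‖ ^ ℓ :=
    (continuous_norm.rpow_const fun _ => Or.inr hℓ.le).measurable
  have hnorm_int : Integrable (fun y : Euc d => ‖y‖ ^ ℓ) m := by
    refine ⟨hmommeas.aestronglyMeasurable, ?_⟩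
    rw [hasFiniteIntegral_iff_ofReal (Filter.Eventually.of_forall fun y => by positivity)]
    exact lt_of_le_of_lt hmom hBfin.lt_top
  have hpt : ∀ y : Euc d, 1 + ‖y‖ ^ (ℓ/2) ≤ 2 + ‖y‖ ^ ℓ := by
    intro y
    have : ‖y‖ ^ (ℓ/2) ≤ 1 + ‖y‖ ^ ℓ := by
      rcases le_total ‖y‖ 1 with h | h
      · have h1 := Real.rpow_le_one (norm_nonneg y) h (by positivity : (0:ℝ) ≤ ℓ/2)
        nlinarith [Real.rpow_nonneg (norm_nonneg y) ℓ]
      · have h1 := Real.rpow_le_rpow_of_exponent_le h (by linarith : ℓ/2 ≤ ℓ)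
        linarith
    linarith
  have hgint : Integrable (fun y : Euc d => 1 + ‖y‖ ^ (ℓ/2)) m := by
    refine ((integrable_const (2:ℝ)).add hnorm_int).mono' hgc.aestronglyMeasurable ?_
    refine Filter.Eventually.of_forall fun y => ?_
    rw [Real.norm_eq_abs, abs_of_nonneg (by positivity)]
    exact hpt y
  have hgval : ∫ y, (1 + ‖y‖ ^ (ℓ/2)) ∂m ≤ A := by
    have h1 : ∫ y, (1 + ‖y‖ ^ (ℓ/2)) ∂m ≤ ∫ y, (2 + ‖y‖ ^ ℓ) ∂m :=
      integral_mono hgint ((integrable_const (2:ℝ)).add hnorm_int) hpt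
    have h2 : ∫ y, (2 + ‖y‖ ^ ℓ) ∂m = 2 + ∫ y, ‖y‖ ^ ℓ ∂m := by
      rw [integral_add (integrable_const _) hnorm_int, integral_const]
      simp
    have h3 : ∫ y, ‖y‖ ^ ℓ ∂m = (∫⁻ y, ENNReal.ofReal (‖y‖ ^ ℓ) ∂m).toReal :=
      integral_eq_lintegral_of_nonneg_ae (Filter.Eventually.of_forall fun y => by positivity)
        hmommeas.aestronglyMeasurable
    have h4 : (∫⁻ y, ENNReal.ofReal (‖y‖ ^ ℓ) ∂m).toReal ≤ B.toReal :=
      ENNReal.toReal_mono hBfin hmom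
    rw [h2, h3] at h1
    simp only [hAdef]
    linarith
  have hg0 : (0:ℝ) ≤ ∫ y, (1 + ‖y‖ ^ (ℓ/2)) ∂m :=
    integral_nonneg fun y => by positivity
  letI : MeasureSpace (Euc d) := ⟨m⟩
  haveI : SigmaFinite (volume : Measure (Euc d)) := by
    change SigmaFinite m; infer_instance
  have hpieq : (Measure.pi fun _ : Fin k => m) = (volume : Measure (Fin k → Euc d)) :=
    (MeasureTheory.volume_pi).symm
  have hGint : Integrable (fun rest : Fin k → Euc d => ∏ i, (1 + ‖rest i‖ ^ (ℓ/2)))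
      (Measure.pi fun _ => m) := by
    rw [hpieq]
    exact Integrable.fintype_prod (f := fun _ : Fin k => fun y : Euc d => 1 + ‖y‖ ^ (ℓ/2))
      (fun _ => hgint)
  have hGval : ∫ rest : Fin k → Euc d, (∏ i, (1 + ‖rest i‖ ^ (ℓ/2))) ∂(Measure.pi fun _ => m)
      = (∫ y, (1 + ‖y‖ ^ (ℓ/2)) ∂m) ^ k := by
    simpa using integral_fintype_prod_eq_pow (ι := Fin k) (fun y : Euc d => 1 + ‖y‖ ^ (ℓ/2))
  have hconsc : ∀ z : Euc d, Continuous fun rest : Fin k → Euc d => φ (Fin.cons z rest) := by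
    intro z
    apply hφc.comp
    apply continuous_pi
    intro i
    refine Fin.cases ?_ ?_ i
    · simp only [Fin.cons_zero]; exact continuous_const
    · intro j; simp only [Fin.cons_succ]; exact continuous_apply j
  set t := ‖x₁‖ ^ (ℓ/2) with htdef
  have ht0 : 0 ≤ t := Real.rpow_nonneg (norm_nonneg _) _
  have hcons_prod : ∀ (z : Euc d) (rest : Fin k → Euc d),
      ∏ i : Fin (k+1), (1 + ‖(Fin.cons z rest : Fin (k+1) → Euc d) i‖ ^ (ℓ/2))
        = (1 + ‖z‖ ^ (ℓ/2)) * ∏ i : Fin k, (1 + ‖rest i‖ ^ (ℓ/2)) := by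
    intro z rest
    rw [Fin.prod_univ_succ]
    simp [Fin.cons_zero, Fin.cons_succ]
  have hFb : ∀ rest : Fin k → Euc d,
      ‖φ (Fin.cons x₁ rest) - φ (Fin.cons 0 rest)‖
        ≤ (C * (2 + t)) * ∏ i, (1 + ‖rest i‖ ^ (ℓ/2)) := by
    intro rest
    have b1 := hCb (Fin.cons x₁ rest)
    have b2 := hCb (Fin.cons 0 rest)
    rw [hcons_prod] at b1 b2
    have hz : ‖(0 : Euc d)‖ ^ (ℓ/2) = 0 := by
      rw [norm_zero]; exact Real.zero_rpow (by positivity)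
    rw [hz] at b2
    have hP0 : (0:ℝ) ≤ ∏ i : Fin k, (1 + ‖rest i‖ ^ (ℓ/2)) :=
      Finset.prod_nonneg fun i _ => by positivity
    calc ‖φ (Fin.cons x₁ rest) - φ (Fin.cons 0 rest)‖
        ≤ |φ (Fin.cons x₁ rest)| + |φ (Fin.cons 0 rest)| := by
          rw [Real.norm_eq_abs]; exact abs_sub _ _
      _ ≤ C * ((1 + t) * ∏ i, (1 + ‖rest i‖ ^ (ℓ/2)))
            + C * ((1 + 0) * ∏ i, (1 + ‖rest i‖ ^ (ℓ/2))) := add_le_add b1 b2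
      _ = (C * (2 + t)) * ∏ i, (1 + ‖rest i‖ ^ (ℓ/2)) := by ring
  have hFmeas : AEStronglyMeasurable
      (fun rest : Fin k → Euc d => φ (Fin.cons x₁ rest) - φ (Fin.cons 0 rest))
      (Measure.pi fun _ => m) :=
    ((hconsc x₁).sub (hconsc 0)).aestronglyMeasurable
  have hbndint : Integrable
      (fun rest : Fin k → Euc d => (C * (2 + t)) * ∏ i, (1 + ‖rest i‖ ^ (ℓ/2)))
      (Measure.pi fun _ => m) := hGint.const_mul _
  have hkey := norm_integral_le_of_norm_le hbndint (Filter.Eventually.of_forall hFb)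
  rw [integral_const_mul, hGval] at hkey
  set P := ∫ y, (1 + ‖y‖ ^ (ℓ/2)) ∂m with hPdef
  have hPk : P ^ k ≤ A ^ k := pow_le_pow_left₀ hg0 hgval k
  have hAk0 : (0:ℝ) ≤ A ^ k := pow_nonneg hA0 k
  have hPk0 : (0:ℝ) ≤ P ^ k := pow_nonneg hg0 k
  have hkey2 : ‖∫ rest : Fin k → Euc d,
      (φ (Fin.cons x₁ rest) - φ (Fin.cons 0 rest)) ∂(Measure.pi fun _ => m)‖
        ≤ 2 * C * A ^ k * (1 + t) := by
    have s1 : C * (2 + t) * P ^ k ≤ C * (2 + t) * A ^ k :=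
      mul_le_mul_of_nonneg_left hPk (mul_nonneg hC0 (by linarith))
    have s2 : C * (2 + t) * A ^ k ≤ 2 * C * A ^ k * (1 + t) := by nlinarith [mul_nonneg (mul_nonneg hC0 hAk0) ht0]
    linarith
  rw [USderiv, abs_mul, abs_of_nonneg (by positivity : (0:ℝ) ≤ (k:ℝ)+1)]
  rw [Real.norm_eq_abs] at hkey2
  have hfin : ((k:ℝ)+1) * |∫ rest : Fin k → Euc d,
      (φ (Fin.cons x₁ rest) - φ (Fin.cons 0 rest)) ∂(Measure.pi fun _ => m)|
        ≤ ((k:ℝ)+1) * (2 * C * A ^ k * (1 + t)) :=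
    mul_le_mul_of_nonneg_left hkey2 (by positivity)
  calc ((k:ℝ)+1) * |∫ rest : Fin k → Euc d,
      (φ (Fin.cons x₁ rest) - φ (Fin.cons 0 rest)) ∂(Measure.pi fun _ => m)|
      ≤ ((k:ℝ)+1) * (2 * C * A ^ k * (1 + t)) := hfin
    _ = 2 * ((k:ℝ)+1) * C * A ^ k * (1 + t) := by ring
end
end
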